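/- arXiv:math-ph/0503009 — 7 statements merged into one kernel-verified Lean document; each statement's English description precedes it below -/
import Mathlib

section
/- For every real number y and every real r ≥ 2, one has |1+y|^r − 1 − r·y ≥ 2^(2−r)·|y|^r. -/
open Set

private lemma aux_abs_rpow (x r : ℝ) : |x| ^ r = (x ^ 2) ^ (r / 2) := by
  rw [← sq_abs x, ← Real.rpow_two, ← Real.rpow_mul (abs_nonneg x)]
  congr 1
  ring

private lemma aux_superadd {a b p : ℝ} (ha : 0 ≤ a) (hb : 0 ≤ b) (hp : 1 ≤ p) :
    a ^ p + b ^ p ≤ (a + b) ^ p := by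
  lift a to NNReal using ha
  lift b to NNReal using hb
  have := NNReal.add_rpow_le_rpow_add a b hp
  exact_mod_cast this

private lemma aux_convex {v p : ℝ} (hv : 0 ≤ v) (hp : 1 ≤ p) :
    ((1 + v) / 2) ^ p ≤ (1 + v ^ p) / 2 := by
  have h := (convexOn_rpow (p := p) hp).2 (mem_Ici.2 zero_le_one) (mem_Ici.2 hv)
    (by norm_num : (0:ℝ) ≤ 1/2) (by norm_num : (0:ℝ) ≤ 1/2) (by norm_num)
  simp only [smul_eq_mul, Real.one_rpow] at h
  calc ((1 + v) / 2) ^ p = (1/2 * 1 + 1/2 * v) ^ p := by ring_nf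
    _ ≤ 1/2 * 1 + 1/2 * v ^ p := h
    _ = (1 + v ^ p) / 2 := by ring

private lemma aux_mul {r : ℝ} (hr : 2 ≤ r) {t : ℝ} (ht : 0 ≤ t) :
    t * (t ^ 2) ^ (r / 2 - 1) = t ^ (r - 1) := by
  rcases eq_or_lt_of_le ht with h | h
  · rw [← h]
    rw [Real.zero_rpow (by norm_num; linarith : r - 1 ≠ 0)]
    ring
  · have h1 : (t ^ 2) ^ (r / 2 - 1) = t ^ (r - 2) := by
      rw [← Real.rpow_two, ← Real.rpow_mul h.le]
      congr 1
      ring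
    rw [h1]
    nth_rewrite 1 [← Real.rpow_one t]
    rw [← Real.rpow_add h]
    congr 1
    ring

private lemma aux_deriv (r c x : ℝ) (hr : 2 ≤ r) :
    HasDerivAt (fun y : ℝ => ((c + y) ^ 2) ^ (r / 2))
      (r * (c + x) * ((c + x) ^ 2) ^ (r / 2 - 1)) x := by
  have h1 : HasDerivAt (fun y : ℝ => (c + y) ^ 2) (2 * (c + x)) x := by
    simpa using ((hasDerivAt_id x).const_add c).fun_pow 2
  have h2 := (Real.hasDerivAt_rpow_const (x := (c + x) ^ 2) (p := r / 2)
    (Or.inr (by linarith))).comp x h1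
  exact h2.congr_deriv (by ring)

/-- Lemma B.4 (lem:c3): for every real `y` and every real `r ≥ 2`,
`|1+y|^r − 1 − r·y ≥ 2^(2−r)·|y|^r`. -/
theorem stmt_1 (y r : ℝ) (hr : 2 ≤ r) :
    (2 : ℝ) ^ (2 - r) * |y| ^ r ≤ |1 + y| ^ r - 1 - r * y := by
  have hrp : (0:ℝ) < r := by linarith
  have hr1 : (1:ℝ) ≤ r - 1 := by linarith
  have hc1 : (2:ℝ) ^ (2 - r) ≤ 1 :=
    Real.rpow_le_one_of_one_le_of_nonpos (by norm_num) (by linarith)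
  have hc0 : (0:ℝ) < (2:ℝ) ^ (2 - r) := Real.rpow_pos_of_pos (by norm_num) _
  set f : ℝ → ℝ := fun y => ((1 + y) ^ 2) ^ (r / 2) - 1 - r * y
    - 2 ^ (2 - r) * (y ^ 2) ^ (r / 2) with hf_def
  set f' : ℝ → ℝ := fun y => r * (1 + y) * ((1 + y) ^ 2) ^ (r / 2 - 1) - r
    - 2 ^ (2 - r) * (r * y * (y ^ 2) ^ (r / 2 - 1)) with hf'_def
  have hder : ∀ x : ℝ, HasDerivAt f (f' x) x := by
    intro x
    have hA := aux_deriv r 1 x hr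
    have hB : HasDerivAt (fun y : ℝ => (y ^ 2) ^ (r / 2))
        (r * x * (x ^ 2) ^ (r / 2 - 1)) x := by
      simpa using aux_deriv r 0 x hr
    have hL : HasDerivAt (fun y : ℝ => r * y) r x := by
      simpa using (hasDerivAt_id x).const_mul r
    exact ((hA.sub_const 1).sub hL).sub (hB.const_mul (2 ^ (2 - r)))
  -- sign of the derivative
  have hpos : ∀ x : ℝ, 0 < x → 0 ≤ f' x := by
    intro x hx
    have h1 : (1 + x) * ((1 + x) ^ 2) ^ (r / 2 - 1) = (1 + x) ^ (r - 1) :=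
      aux_mul hr (by linarith)
    have h2 : x * (x ^ 2) ^ (r / 2 - 1) = x ^ (r - 1) := aux_mul hr hx.le
    have h3 : (1:ℝ) ^ (r-1) + x ^ (r - 1) ≤ (1 + x) ^ (r - 1) :=
      aux_superadd zero_le_one hx.le hr1
    rw [Real.one_rpow] at h3
    have hxp : (0:ℝ) ≤ x ^ (r - 1) := Real.rpow_nonneg hx.le _
    simp only [hf'_def]
    rw [mul_assoc r, h1]
    rw [show r * x * (x ^ 2) ^ (r / 2 - 1) = r * (x * (x ^ 2) ^ (r / 2 - 1)) from by ring, h2]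
    nlinarith [mul_le_of_le_one_left hxp hc1]
  have hneg : ∀ x : ℝ, x < 0 → f' x ≤ 0 := by
    intro x hx
    set u : ℝ := -x with hu_def
    have hu : 0 < u := by rw [hu_def]; linarith
    have h2 : x * (x ^ 2) ^ (r / 2 - 1) = -(u ^ (r - 1)) := by
      have : x ^ 2 = u ^ 2 := by rw [hu_def]; ring
      rw [this]
      have := aux_mul hr hu.le
      nlinarith [this]
    have hup : (0:ℝ) ≤ u ^ (r - 1) := Real.rpow_nonneg hu.le _
    have key : (1 + x) * ((1 + x) ^ 2) ^ (r / 2 - 1) + 2 ^ (2 - r) * u ^ (r - 1) ≤ 1 := by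
      rcases le_or_gt 0 (1 + x) with hx1 | hx1
      · -- -1 ≤ x < 0
        have h1 : (1 + x) * ((1 + x) ^ 2) ^ (r / 2 - 1) = (1 + x) ^ (r - 1) :=
          aux_mul hr hx1
        have h3 : (1 + x) ^ (r - 1) + u ^ (r - 1) ≤ (1:ℝ) := by
          have := aux_superadd hx1 hu.le hr1
          have he : (1 + x) + u = 1 := by simp [hu_def]
          rw [he, Real.one_rpow] at this
          exact this
        nlinarith [mul_le_of_le_one_left hup hc1]
      · -- x < -1
        set v : ℝ := -(1 + x) with hv_def
        have hv : 0 < v := by rw [hv_def]; linarith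
        have h1 : (1 + x) * ((1 + x) ^ 2) ^ (r / 2 - 1) = -(v ^ (r - 1)) := by
          have hsq : (1 + x) ^ 2 = v ^ 2 := by rw [hv_def]; ring
          rw [hsq]
          have := aux_mul hr hv.le
          nlinarith [this]
        have hu_eq : u = 1 + v := by rw [hu_def, hv_def]; ring
        have hconv : ((1 + v) / 2) ^ (r - 1) ≤ (1 + v ^ (r - 1)) / 2 :=
          aux_convex hv.le hr1
        have hdiv : ((1 + v) / 2) ^ (r - 1) = (1 + v) ^ (r - 1) / 2 ^ (r - 1) :=
          Real.div_rpow (by linarith) (by norm_num) (r - 1)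
        have h2r : (2:ℝ) ^ (2 - r) * 2 ^ (r - 1) = 2 := by
          rw [← Real.rpow_add (by norm_num)]
          norm_num
        have h2pow : (0:ℝ) < (2:ℝ) ^ (r - 1) := Real.rpow_pos_of_pos (by norm_num) _
        have heq2 : (2:ℝ) ^ (2 - r) = 2 / 2 ^ (r - 1) := by
          rw [eq_div_iff h2pow.ne']; exact h2r
        have hkey2 : 2 ^ (2 - r) * (1 + v) ^ (r - 1) ≤ 1 + v ^ (r - 1) := by
          rw [hdiv] at hconv
          calc 2 ^ (2 - r) * (1 + v) ^ (r - 1)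
              = 2 * ((1 + v) ^ (r - 1) / 2 ^ (r - 1)) := by rw [heq2]; ring
            _ ≤ 2 * ((1 + v ^ (r - 1)) / 2) := by linarith
            _ = 1 + v ^ (r - 1) := by ring
        rw [h1, hu_eq]
        linarith
    simp only [hf'_def]
    rw [show r * x * (x ^ 2) ^ (r / 2 - 1) = r * (x * (x ^ 2) ^ (r / 2 - 1)) from by ring, h2]
    nlinarith [mul_le_mul_of_nonneg_left key hrp.le]
  have hf0 : f 0 = 0 := by
    simp [hf_def, Real.zero_rpow (show r / 2 ≠ 0 by positivity),
      Real.one_rpow]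
  have hcont : Continuous f := by
    have : Differentiable ℝ f := fun x => (hder x).differentiableAt
    exact this.continuous
  have hODE : ∀ x : ℝ, 0 ≤ f x := by
    intro x
    rcases le_or_gt 0 x with hx | hx
    · have hmono : MonotoneOn f (Ici 0) := by
        apply monotoneOn_of_deriv_nonneg (convex_Ici 0) hcont.continuousOn
        · exact fun z _ => ((hder z).differentiableAt).differentiableWithinAt
        · intro z hz
          rw [interior_Ici] at hz
          rw [(hder z).deriv]
          exact hpos z hz
      have := hmono (mem_Ici.2 le_rfl) hx hx
      rwa [hf0] at this
    · have hanti : AntitoneOn f (Iic 0) := by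
        apply antitoneOn_of_deriv_nonpos (convex_Iic 0) hcont.continuousOn
        · exact fun z _ => ((hder z).differentiableAt).differentiableWithinAt
        · intro z hz
          rw [interior_Iic] at hz
          rw [(hder z).deriv]
          exact hneg z hz
      have := hanti (mem_Iic.2 hx.le) (mem_Iic.2 le_rfl) hx.le
      rwa [hf0] at this
  have h := hODE y
  rw [aux_abs_rpow (1 + y) r, aux_abs_rpow y r]
  simp only [hf_def] at h
  linarith
end

section
/- Let d ≥ 1, let ε > 0, 1 ≤ r ≤ 2, ρ₁ > 0 and C_a > 0 be real numbers, and let V : ℝ^d → ℝ be twice continuously differentiable such that for all x, ξ ∈ ℝ^d one has ξ · (Hess V(x)) ξ ≥ ρ₁ ε² (1+ε²|x|²)^((r−2)/2) |ξ|². Then for every a ∈ ℝ^d with ε|a| ≤ C_a and every x ∈ ℝ^d, V(x+a) − V(a) − ∇V(a)·x ≥ C₀ ρ₁ ε² |x|² (1+ε²|x|²)^((r−2)/2), where C₀ := 1 / (2·(2(1+C_a²))^((2−r)/2)). -/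
/-- 1D Taylor-type bound: if `g'` is the derivative of `g` and `g''` of `g'`, and
`g'' ≥ M` on `[0,1]`, then `g 1 - g 0 - g' 0 ≥ M/2`. -/
lemma taylor_lower_1d (g g' g'' : ℝ → ℝ) (M : ℝ)
    (hg : ∀ t, HasDerivAt g (g' t) t)
    (hg' : ∀ t, HasDerivAt g' (g'' t) t)
    (hM : ∀ t ∈ Set.Icc (0:ℝ) 1, M ≤ g'' t) :
    g 0 + g' 0 + M / 2 ≤ g 1 := by
  have hintIcc : interior (Set.Icc (0:ℝ) 1) = Set.Ioo 0 1 := interior_Icc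
  -- Step 1: φ t = g' t - g' 0 - M t is monotone on [0,1]
  set φ : ℝ → ℝ := fun t => g' t - g' 0 - M * t with hφdef
  have hφd : ∀ t, HasDerivAt φ (g'' t - M) t := by
    intro t
    have := ((hg' t).sub_const (g' 0)).sub ((hasDerivAt_id t).const_mul M)
    exact this.congr_deriv (by ring)
  have hφmono : MonotoneOn φ (Set.Icc 0 1) := by
    apply monotoneOn_of_deriv_nonneg (convex_Icc 0 1)
    · exact fun t _ => (hφd t).continuousAt.continuousWithinAt
    · intro t _
      exact (hφd t).differentiableAt.differentiableWithinAt
    · intro t ht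
      rw [hintIcc] at ht
      rw [(hφd t).deriv]
      have ht' : t ∈ Set.Icc (0:ℝ) 1 := ⟨ht.1.le, ht.2.le⟩
      linarith [hM t ht']
  have hφ0 : φ 0 = 0 := by simp [hφdef]
  have hφnonneg : ∀ t ∈ Set.Icc (0:ℝ) 1, 0 ≤ φ t := by
    intro t ht
    have := hφmono (Set.left_mem_Icc.2 one_pos.le) ht ht.1
    rwa [hφ0] at this
  -- Step 2: ψ t = g t - g' 0 * t - M t²/2 is monotone on [0,1]
  set ψ : ℝ → ℝ := fun t => g t - g' 0 * t - M * t ^ 2 / 2 with hψdef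
  have hψd : ∀ t, HasDerivAt ψ (φ t) t := by
    intro t
    have h1 : HasDerivAt (fun t : ℝ => g' 0 * t) (g' 0) t := by
      simpa using (hasDerivAt_id t).const_mul (g' 0)
    have h2 : HasDerivAt (fun t : ℝ => M * t ^ 2 / 2) (M * t) t := by
      have := ((hasDerivAt_pow 2 t).const_mul M).div_const 2
      simpa using this.congr_deriv (by ring)
    have := ((hg t).sub h1).sub h2
    exact this
  have hψmono : MonotoneOn ψ (Set.Icc 0 1) := by
    apply monotoneOn_of_deriv_nonneg (convex_Icc 0 1)
    · exact fun t _ => (hψd t).continuousAt.continuousWithinAt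
    · intro t _
      exact (hψd t).differentiableAt.differentiableWithinAt
    · intro t ht
      rw [hintIcc] at ht
      rw [(hψd t).deriv]
      exact hφnonneg t ⟨ht.1.le, ht.2.le⟩
  have := hψmono (Set.left_mem_Icc.2 one_pos.le) (Set.right_mem_Icc.2 one_pos.le)
    zero_le_one
  simp only [hψdef] at this
  norm_num at this
  linarith

set_option maxHeartbeats 1000000 in
/-- Case (ii) of Lemma A.1 (lem:RVbd): for `1 ≤ r ≤ 2`, a `C²` potential `V` on `ℝ^d`
with `ξ·(Hess V(x))ξ ≥ ρ₁ ε² (1+ε²|x|²)^((r−2)/2) |ξ|²`, and `a` with `ε|a| ≤ C_a`,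
the Taylor remainder `R_V(x) = V(x+a) − V(a) − ∇V(a)·x` satisfies
`R_V(x) ≥ C₀ ρ₁ ε² |x|² (1+ε²|x|²)^((r−2)/2)` with `C₀ = 1/(2(2(1+C_a²))^((2−r)/2))`. -/
theorem stmt_4 (d : ℕ) (hd : 1 ≤ d) (ε r ρ₁ C_a : ℝ) (hε : 0 < ε)
    (hr1 : 1 ≤ r) (hr2 : r ≤ 2) (hρ : 0 < ρ₁) (hCa : 0 < C_a)
    (V : EuclideanSpace ℝ (Fin d) → ℝ) (hV : ContDiff ℝ 2 V)
    (hHess : ∀ x ξ : EuclideanSpace ℝ (Fin d),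
      ρ₁ * ε ^ 2 * (1 + ε ^ 2 * ‖x‖ ^ 2) ^ ((r - 2) / 2) * ‖ξ‖ ^ 2 ≤
        iteratedFDeriv ℝ 2 V x ![ξ, ξ]) :
    ∀ a : EuclideanSpace ℝ (Fin d), ε * ‖a‖ ≤ C_a →
    ∀ x : EuclideanSpace ℝ (Fin d),
      (1 / (2 * (2 * (1 + C_a ^ 2)) ^ ((2 - r) / 2))) * ρ₁ * ε ^ 2 * ‖x‖ ^ 2 *
          (1 + ε ^ 2 * ‖x‖ ^ 2) ^ ((r - 2) / 2) ≤
        V (x + a) - V a - fderiv ℝ V a x := by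
  intro a ha x
  -- the line through a in direction x
  set L : ℝ → EuclideanSpace ℝ (Fin d) := fun t => a + t • x with hLdef
  have hLd : ∀ t : ℝ, HasDerivAt L x t := by
    intro t
    exact (((hasDerivAt_id t).smul_const x).const_add a).congr_deriv (by simp)
  have hVdiff : Differentiable ℝ V := hV.differentiable (by norm_num)
  set F : EuclideanSpace ℝ (Fin d) → (EuclideanSpace ℝ (Fin d) →L[ℝ] ℝ) :=
    fderiv ℝ V with hFdef
  have hFc1 : ContDiff ℝ 1 F := hV.fderiv_right (by norm_num)
  have hFdiff : Differentiable ℝ F := hFc1.differentiable (by norm_num)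
  -- first and second derivatives along the line
  set g : ℝ → ℝ := fun t => V (L t) with hgdef
  set g' : ℝ → ℝ := fun t => F (L t) x with hg'def
  set g'' : ℝ → ℝ := fun t => fderiv ℝ F (L t) x x with hg''def
  have hgd : ∀ t, HasDerivAt g (g' t) t := fun t =>
    (hVdiff (L t)).hasFDerivAt.comp_hasDerivAt t (hLd t)
  have hg'd : ∀ t, HasDerivAt g' (g'' t) t := by
    intro t
    have h1 : HasFDerivAt (fun y => F y x)
        (((ContinuousLinearMap.apply ℝ ℝ x).comp (fderiv ℝ F (L t)))) (L t) :=
      (ContinuousLinearMap.apply ℝ ℝ x).hasFDerivAt.comp (L t) (hFdiff (L t)).hasFDerivAt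
    have := h1.comp_hasDerivAt t (hLd t)
    exact this
  -- the Hessian along the segment
  have hIter : ∀ t, g'' t = iteratedFDeriv ℝ 2 V (L t) ![x, x] := by
    intro t
    rw [iteratedFDeriv_two_apply]
    simp [hg''def, hFdef]
  -- constant lower bound M on the Hessian over the segment
  set B : ℝ := 2 * (1 + C_a ^ 2) with hBdef
  have hB1 : (1:ℝ) < B := by nlinarith
  set M : ℝ := ρ₁ * ε ^ 2 * (B ^ ((r - 2) / 2) * (1 + ε ^ 2 * ‖x‖ ^ 2) ^ ((r - 2) / 2))
      * ‖x‖ ^ 2 with hMdef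
  have hexp : (r - 2) / 2 ≤ 0 := by linarith
  have hM : ∀ t ∈ Set.Icc (0:ℝ) 1, M ≤ g'' t := by
    intro t ht
    rw [hIter t]
    refine le_trans ?_ (hHess (L t) x)
    have hnorm : ‖L t‖ ≤ ‖a‖ + ‖x‖ := by
      calc ‖L t‖ ≤ ‖a‖ + ‖t • x‖ := norm_add_le _ _
        _ ≤ ‖a‖ + ‖x‖ := by
            rw [norm_smul]
            have : |t| ≤ 1 := abs_le.2 ⟨by linarith [ht.1], ht.2⟩
            have := mul_le_of_le_one_left (norm_nonneg x) this
            simp only [Real.norm_eq_abs]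
            linarith
    have hεa : ε ^ 2 * ‖a‖ ^ 2 ≤ C_a ^ 2 := by
      have h := mul_le_mul ha ha (by positivity) hCa.le
      nlinarith [h]
    have hkey : 1 + ε ^ 2 * ‖L t‖ ^ 2 ≤ B * (1 + ε ^ 2 * ‖x‖ ^ 2) := by
      have h1 : ‖L t‖ ^ 2 ≤ (‖a‖ + ‖x‖) ^ 2 :=
        pow_le_pow_left₀ (norm_nonneg _) hnorm 2
      have h2 : (‖a‖ + ‖x‖) ^ 2 ≤ 2 * ‖a‖ ^ 2 + 2 * ‖x‖ ^ 2 := by nlinarith [sq_nonneg (‖a‖ - ‖x‖)]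
      have h3 : ε ^ 2 * ‖L t‖ ^ 2 ≤ 2 * (ε ^ 2 * ‖a‖ ^ 2) + 2 * (ε ^ 2 * ‖x‖ ^ 2) := by
        have := mul_le_mul_of_nonneg_left (h1.trans h2) (sq_nonneg ε)
        linarith [this]  -- ring-normalized below if needed
      have h4 : (0:ℝ) ≤ C_a ^ 2 * (ε ^ 2 * ‖x‖ ^ 2) := by positivity
      rw [hBdef]
      nlinarith [h3, h4, hεa]
    have hpos1 : (0:ℝ) < 1 + ε ^ 2 * ‖x‖ ^ 2 := by positivity
    have hpos2 : (0:ℝ) < B * (1 + ε ^ 2 * ‖x‖ ^ 2) := by positivity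
    have hrpow : (B * (1 + ε ^ 2 * ‖x‖ ^ 2)) ^ ((r - 2) / 2) ≤
        (1 + ε ^ 2 * ‖L t‖ ^ 2) ^ ((r - 2) / 2) :=
      Real.rpow_le_rpow_of_nonpos (by positivity) hkey hexp
    rw [Real.mul_rpow (by positivity) hpos1.le] at hrpow
    rw [hMdef]
    have hc : (0:ℝ) ≤ ρ₁ * ε ^ 2 := by positivity
    calc ρ₁ * ε ^ 2 * (B ^ ((r - 2) / 2) * (1 + ε ^ 2 * ‖x‖ ^ 2) ^ ((r - 2) / 2)) * ‖x‖ ^ 2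
        ≤ ρ₁ * ε ^ 2 * ((1 + ε ^ 2 * ‖L t‖ ^ 2) ^ ((r - 2) / 2)) * ‖x‖ ^ 2 := by
          apply mul_le_mul_of_nonneg_right _ (sq_nonneg ‖x‖)
          exact mul_le_mul_of_nonneg_left hrpow hc
      _ = ρ₁ * ε ^ 2 * (1 + ε ^ 2 * ‖L t‖ ^ 2) ^ ((r - 2) / 2) * ‖x‖ ^ 2 := by ring
  -- apply the 1D lemma
  have hmain := taylor_lower_1d g g' g'' M hgd hg'd hM
  have hL0 : L 0 = a := by simp [hLdef]
  have hL1 : L 1 = x + a := by simp [hLdef, add_comm]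
  have hg0 : g 0 = V a := by rw [hgdef]; simp [hL0]
  have hg1 : g 1 = V (x + a) := by rw [hgdef]; simp [hL1]
  have hg'0 : g' 0 = fderiv ℝ V a x := by rw [hg'def]; simp [hL0, hFdef]
  -- identify the constant
  have hBpow : B ^ ((r - 2) / 2) = (B ^ ((2 - r) / 2))⁻¹ := by
    rw [← Real.rpow_neg (by positivity : (0:ℝ) ≤ B)]
    ring_nf
  have hBpos : (0:ℝ) < B ^ ((2 - r) / 2) := Real.rpow_pos_of_pos (by linarith) _
  have hconst : (1 / (2 * B ^ ((2 - r) / 2))) * ρ₁ * ε ^ 2 * ‖x‖ ^ 2 *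
      (1 + ε ^ 2 * ‖x‖ ^ 2) ^ ((r - 2) / 2) = M / 2 := by
    rw [hMdef, hBpow]
    field_simp
  rw [hconst]
  rw [hg0, hg1, hg'0] at hmain
  linarith
end

section
/- Let d ≥ 1, ε > 0, r ≥ 2, C_V > 0 and C_a > 0 be real numbers, and let V : ℝ^d → ℝ be three times continuously differentiable such that |∂_j∂_k∂_l V(x)| ≤ C_V ε³ (1+ε²|x|²)^((r−3)/2) for all x ∈ ℝ^d and all indices j,k,l ∈ {1,…,d}. Then for every a ∈ ℝ^d with ε|a| ≤ C_a, every x ∈ ℝ^d and every index j, one has |∂_j V(x+a) − ∂_j V(a) − Σ_k ∂_k∂_j V(a)·x_k| ≤ C₁ ε³ |x|² (1+ε²|x|²)^(max(r−3,0)/2), where C₁ := (1/2)·C_V·d·(2(1+C_a²))^(max(r−3,0)/2). -/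
open Set

/-- Second-order Taylor bound on `[0,1]` for real functions. -/
lemma taylor2_bound {f f1 f2 : ℝ → ℝ} {M : ℝ}
    (h1 : ∀ t, HasDerivAt f (f1 t) t) (h2 : ∀ t, HasDerivAt f1 (f2 t) t)
    (hM : ∀ t ∈ Set.Icc (0:ℝ) 1, |f2 t| ≤ M) :
    |f 1 - f 0 - f1 0| ≤ M / 2 := by
  have step1 : ∀ t ∈ Set.Icc (0:ℝ) 1, |f1 t - f1 0| ≤ M * t := by
    have := norm_image_sub_le_of_norm_deriv_le_segment' (f := f1) (f' := f2) (a := 0) (b := 1)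
      (fun s _ => (h2 s).hasDerivWithinAt)
      (fun s hs => hM s ⟨hs.1, hs.2.le⟩)
    intro t ht
    simpa using this t ht
  set g : ℝ → ℝ := fun t => f t - f 0 - t * f1 0 with hgdef
  have hg : ∀ t, HasDerivAt g (f1 t - f1 0) t := by
    intro t
    exact (((h1 t).sub_const (f 0)).sub ((hasDerivAt_id t).mul_const (f1 0))).congr_deriv (by ring)
  have hB : ∀ t : ℝ, HasDerivAt (fun s => M * s ^ 2 / 2) (M * t) t := by
    intro t
    have := (((hasDerivAt_pow 2 t).const_mul M).div_const 2)
    refine this.congr_deriv ?_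
    ring
  have key := image_norm_le_of_norm_deriv_right_le_deriv_boundary (a := (0:ℝ)) (b := 1)
    (f := g) (f' := fun t => f1 t - f1 0) (B := fun s => M * s ^ 2 / 2) (B' := fun t => M * t)
    (fun t _ => (hg t).continuousAt.continuousWithinAt)
    (fun t _ => (hg t).hasDerivWithinAt)
    (by simp [hgdef]) hB
    (fun t ht => by simpa using step1 t ⟨ht.1, ht.2.le⟩)
    (right_mem_Icc.2 zero_le_one)
  have hg1 : g 1 = f 1 - f 0 - f1 0 := by simp [hgdef]
  rw [← hg1]
  calc |g 1| ≤ M * 1 ^ 2 / 2 := key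
  _ = M / 2 := by ring

lemma key_rpow {r C_a A B : ℝ} (hA : 1 ≤ A) (hB : 1 ≤ B) (hC : 0 < C_a)
    (hAB : A ≤ 2 * (1 + C_a ^ 2) * B) :
    A ^ ((r - 3) / 2) ≤ (2 * (1 + C_a ^ 2)) ^ (max (r - 3) 0 / 2) *
      B ^ (max (r - 3) 0 / 2) := by
  rcases le_total 3 r with h | h
  · rw [max_eq_left (by linarith : (0:ℝ) ≤ r - 3),
      ← Real.mul_rpow (by positivity) (by linarith : (0:ℝ) ≤ B)]
    exact Real.rpow_le_rpow (by linarith) hAB (by linarith)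
  · rw [max_eq_right (by linarith : r - 3 ≤ (0:ℝ))]
    simp only [zero_div, Real.rpow_zero, mul_one]
    exact Real.rpow_le_one_of_one_le_of_nonpos hA (by linarith)

set_option maxHeartbeats 1000000 in
/-- Case (i) of Lemma B.1 (lem:RVup): for `r ≥ 2` and a `C³` potential `V` on `ℝ^d`
whose third partial derivatives satisfy `|∂_j∂_k∂_l V(x)| ≤ C_V ε³ (1+ε²|x|²)^((r−3)/2)`,
and `a` with `ε|a| ≤ C_a`, one has
`|∂_j V(x+a) − ∂_j V(a) − Σ_k ∂_k∂_j V(a) x_k| ≤ C₁ ε³ |x|² (1+ε²|x|²)^(max(r−3,0)/2)`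
with `C₁ = (1/2) C_V d (2(1+C_a²))^(max(r−3,0)/2)`. -/
theorem stmt_5 (d : ℕ) (hd : 1 ≤ d) (ε r C_V C_a : ℝ) (hε : 0 < ε) (hr : 2 ≤ r)
    (hCV : 0 < C_V) (hCa : 0 < C_a)
    (V : EuclideanSpace ℝ (Fin d) → ℝ) (hV : ContDiff ℝ 3 V)
    (hD3 : ∀ x : EuclideanSpace ℝ (Fin d), ∀ j k l : Fin d,
      |iteratedFDeriv ℝ 3 V x
          ![EuclideanSpace.single j 1, EuclideanSpace.single k 1, EuclideanSpace.single l 1]| ≤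
        C_V * ε ^ 3 * (1 + ε ^ 2 * ‖x‖ ^ 2) ^ ((r - 3) / 2)) :
    ∀ a : EuclideanSpace ℝ (Fin d), ε * ‖a‖ ≤ C_a →
    ∀ x : EuclideanSpace ℝ (Fin d), ∀ j : Fin d,
      |fderiv ℝ V (x + a) (EuclideanSpace.single j 1) -
          fderiv ℝ V a (EuclideanSpace.single j 1) -
          iteratedFDeriv ℝ 2 V a ![x, EuclideanSpace.single j 1]| ≤
        (1 / 2 * C_V * (d : ℝ) * (2 * (1 + C_a ^ 2)) ^ (max (r - 3) 0 / 2)) * ε ^ 3 * ‖x‖ ^ 2 *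
          (1 + ε ^ 2 * ‖x‖ ^ 2) ^ (max (r - 3) 0 / 2) := by
  intro a ha x j
  set e : Fin d → EuclideanSpace ℝ (Fin d) := fun k => EuclideanSpace.single k 1 with he
  set g1 : EuclideanSpace ℝ (Fin d) → (EuclideanSpace ℝ (Fin d) →L[ℝ] ℝ) := fderiv ℝ V
    with hg1def
  set g2 := fderiv ℝ g1 with hg2def
  set g3 := fderiv ℝ g2 with hg3def
  have hg1c : ContDiff ℝ 2 g1 := hV.fderiv_right (by norm_num)
  have hg2c : ContDiff ℝ 1 g2 := hg1c.fderiv_right (by norm_num)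
  have hg1d : Differentiable ℝ g1 := hg1c.differentiable (by norm_num)
  have hg2d : Differentiable ℝ g2 := hg2c.differentiable (by norm_num)
  have hline : ∀ t : ℝ, HasDerivAt (fun s : ℝ => a + s • x) x t := by
    intro t
    simpa using ((hasDerivAt_id t).smul_const x).const_add a
  -- first and second derivatives of f
  have hd1 : ∀ t : ℝ, HasDerivAt (fun t : ℝ => g1 (a + t • x) (e j)) (g2 (a + t • x) x (e j)) t := by
    intro t
    have h := ((hg1d (a + t • x)).hasFDerivAt).comp_hasDerivAt t (hline t)
    have h2 := h.clm_apply (hasDerivAt_const t (e j))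
    simpa [hg2def] using h2
  have hd2 : ∀ t : ℝ, HasDerivAt (fun t : ℝ => g2 (a + t • x) x (e j))
      (g3 (a + t • x) x x (e j)) t := by
    intro t
    have h := HasFDerivAt.comp_hasDerivAt (l := g2) t ((hg2d (a + t • x)).hasFDerivAt) (hline t)
    have h2 := (h.clm_apply (hasDerivAt_const t x)).clm_apply (hasDerivAt_const t (e j))
    simpa [hg3def] using h2
  -- identification of the third derivative
  have h3app : ∀ z u v w, iteratedFDeriv ℝ 3 V z ![u, v, w] = g3 z u v w := by
    intro z u v w
    have h := iteratedFDeriv_succ_apply_right (𝕜 := ℝ) (f := V) (x := z) (n := 2) ![u, v, w]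
    rw [iteratedFDeriv_two_apply] at h
    have h2 : iteratedFDeriv ℝ 3 V z ![u, v, w] =
        fderiv ℝ (fderiv ℝ (fun y => fderiv ℝ V y)) z (Fin.init ![u, v, w] 0)
          (Fin.init ![u, v, w] 1) (![u, v, w] (Fin.last 2)) := h
    simpa [hg3def, hg2def, hg1def, Fin.init, Fin.last] using h2
  -- basis expansion
  have hbasis : ∀ y : EuclideanSpace ℝ (Fin d), y = ∑ k, y k • e k := by
    intro y
    have h := (EuclideanSpace.basisFun (Fin d) ℝ).sum_repr y
    simp only [EuclideanSpace.basisFun_apply, EuclideanSpace.basisFun_repr] at h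
    exact h.symm
  have hexp : ∀ z, g3 z x x (e j) =
      ∑ k, ∑ l, x k * (x l * g3 z (e k) (e l) (e j)) := by
    intro z
    conv_lhs => rw [hbasis x]
    simp only [map_sum, map_smul, ContinuousLinearMap.sum_apply,
      ContinuousLinearMap.smul_apply, smul_eq_mul, Finset.mul_sum]
    rw [Finset.sum_comm]
    exact Finset.sum_congr rfl fun k _ => Finset.sum_congr rfl fun l _ => by ring
  -- norms
  have hnormsq : ‖x‖ ^ 2 = ∑ k, (x k) ^ 2 := by
    rw [EuclideanSpace.norm_eq, Real.sq_sqrt (by positivity)]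
    simp [sq_abs]
  have hsum : (∑ k, |x k|) ^ 2 ≤ (d : ℝ) * ‖x‖ ^ 2 := by
    have h := Finset.sum_mul_sq_le_sq_mul_sq Finset.univ (fun _ => (1:ℝ)) (fun k => |x k|)
    simpa [hnormsq, sq_abs, Finset.card_univ] using h
  -- pointwise bound on the second derivative
  set K : ℝ := (2 * (1 + C_a ^ 2)) ^ (max (r - 3) 0 / 2) *
      (1 + ε ^ 2 * ‖x‖ ^ 2) ^ (max (r - 3) 0 / 2) with hKdef
  have hK0 : 0 ≤ K := by positivity
  set M : ℝ := (d : ℝ) * ‖x‖ ^ 2 * (C_V * ε ^ 3 * K) with hMdef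
  have hbound : ∀ t ∈ Set.Icc (0:ℝ) 1, |g3 (a + t • x) x x (e j)| ≤ M := by
    intro t ht
    set z := a + t • x with hzdef
    have hterm : ∀ k l : Fin d, |g3 z (e k) (e l) (e j)| ≤ C_V * ε ^ 3 * K := by
      intro k l
      have h1 := hD3 z k l j
      rw [show (![EuclideanSpace.single k 1, EuclideanSpace.single l 1,
          EuclideanSpace.single j 1]) = ![e k, e l, e j] from rfl, h3app] at h1
      refine h1.trans ?_
      have hAB : 1 + ε ^ 2 * ‖z‖ ^ 2 ≤ 2 * (1 + C_a ^ 2) * (1 + ε ^ 2 * ‖x‖ ^ 2) := ?_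
      · rw [hKdef]
        exact mul_le_mul_of_nonneg_left
          (key_rpow (le_add_of_nonneg_right (by positivity))
            (le_add_of_nonneg_right (by positivity)) hCa hAB) (by positivity)
      have hn : ‖z‖ ≤ ‖a‖ + ‖x‖ := by
        calc ‖z‖ ≤ ‖a‖ + ‖t • x‖ := norm_add_le _ _
        _ = ‖a‖ + |t| * ‖x‖ := by rw [norm_smul, Real.norm_eq_abs]
        _ ≤ ‖a‖ + 1 * ‖x‖ := by
            gcongr
            rw [abs_of_nonneg ht.1]; exact ht.2
        _ = ‖a‖ + ‖x‖ := by ring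
      have h2 : ε ^ 2 * ‖z‖ ^ 2 ≤ ε ^ 2 * (‖a‖ + ‖x‖) ^ 2 :=
        mul_le_mul_of_nonneg_left (pow_le_pow_left₀ (norm_nonneg _) hn 2) (by positivity)
      have h3 : (ε * ‖a‖) ^ 2 ≤ C_a ^ 2 :=
        pow_le_pow_left₀ (by positivity) ha 2
      nlinarith [sq_nonneg (ε * ‖a‖ - ε * ‖x‖), sq_nonneg (ε * ‖x‖), sq_nonneg C_a,
        mul_nonneg (mul_nonneg (sq_nonneg C_a) (sq_nonneg ε)) (sq_nonneg ‖x‖)]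
    calc |g3 z x x (e j)| = |∑ k, ∑ l, x k * (x l * g3 z (e k) (e l) (e j))| := by
          rw [hexp z]
    _ ≤ ∑ k, ∑ l, |x k| * (|x l| * (C_V * ε ^ 3 * K)) := by
        refine (Finset.abs_sum_le_sum_abs _ _).trans (Finset.sum_le_sum fun k _ => ?_)
        refine (Finset.abs_sum_le_sum_abs _ _).trans (Finset.sum_le_sum fun l _ => ?_)
        rw [abs_mul, abs_mul]
        gcongr
        exact hterm k l
    _ = (∑ k, |x k|) * (∑ l, |x l|) * (C_V * ε ^ 3 * K) := by
        rw [Finset.sum_mul_sum Finset.univ Finset.univ (fun k => |x k|) (fun l => |x l|),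
          Finset.sum_mul]
        refine Finset.sum_congr rfl fun k _ => ?_
        rw [Finset.sum_mul]
        exact Finset.sum_congr rfl fun l _ => by ring
    _ = (∑ k, |x k|) ^ 2 * (C_V * ε ^ 3 * K) := by ring
    _ ≤ ((d : ℝ) * ‖x‖ ^ 2) * (C_V * ε ^ 3 * K) :=
        mul_le_mul_of_nonneg_right hsum
          (mul_nonneg (mul_nonneg hCV.le (by positivity)) hK0)
    _ = M := by rw [hMdef]
  have main := taylor2_bound hd1 hd2 hbound
  have e1 : g1 (a + (1:ℝ) • x) (e j) = fderiv ℝ V (x + a) (e j) := by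
    rw [hg1def, one_smul, add_comm]
  have e2 : g1 (a + (0:ℝ) • x) (e j) = fderiv ℝ V a (e j) := by
    rw [hg1def, zero_smul, add_zero]
  have e3 : g2 (a + (0:ℝ) • x) x (e j) = iteratedFDeriv ℝ 2 V a ![x, e j] := by
    rw [iteratedFDeriv_two_apply, zero_smul, add_zero]
    simp [hg2def, hg1def]
  rw [e1, e2, e3] at main
  refine main.trans (le_of_eq ?_)
  rw [hMdef, hKdef]
  ring
end

section
/- Let d ≥ 1 and let C_V > 0, C_a > 0 be real numbers. There exists a constant C₂ > 0, depending only on C_V, d and C_a, such that for every 1 ≤ r < 2, every ε > 0, every three times continuously differentiable V : ℝ^d → ℝ satisfying |∂_j∂_k∂_l V(x)| ≤ C_V ε³ (1+ε²|x|²)^((r−3)/2) for all x ∈ ℝ^d and all j,k,l, every a ∈ ℝ^d with ε|a| ≤ C_a, every x ∈ ℝ^d and every index j, one has |∂_j V(x+a) − ∂_j V(a) − Σ_k ∂_k∂_j V(a)·x_k| ≤ C₂ ε³ |x|² (1+ε²|x|²)^((r−2)/2). -/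
open Real

open Real

lemma integral_aux {M : ℝ} (hM : 0 ≤ M) :
    ∫ t in (0:ℝ)..1, (1 + M^2*t^2)⁻¹ ≤ 3 * (1+M^2) ^ (-(1:ℝ)/2) := by
  have hpow : (1+M^2) ^ (-(1:ℝ)/2) = (Real.sqrt (1+M^2))⁻¹ := by
    rw [Real.sqrt_eq_rpow, ← Real.rpow_neg (by positivity)]
    norm_num
  have hint : ∀ c : ℝ, Continuous fun t : ℝ => (1 + c^2*t^2)⁻¹ := by
    intro c
    exact (continuous_const.add ((continuous_const.mul (continuous_pow 2)))).inv₀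
      (fun t => by simp only [Pi.add_apply, Pi.mul_apply]; positivity)
  have h4 : (0:ℝ) < Real.sqrt (1+M^2) := Real.sqrt_pos.mpr (by positivity)
  rcases le_or_gt M 1 with h | h
  · have h1 : ∫ t in (0:ℝ)..1, (1 + M^2*t^2)⁻¹ ≤ ∫ t in (0:ℝ)..1, (1:ℝ) := by
      apply intervalIntegral.integral_mono_on (by norm_num)
        ((hint M).intervalIntegrable _ _) (intervalIntegrable_const)
      intro t ht
      rw [inv_le_one_iff₀]
      right; nlinarith [sq_nonneg (M*t)]
    have h2 : Real.sqrt (1+M^2) ≤ 3/2 := by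
      rw [show (3/2:ℝ) = Real.sqrt ((3/2)^2) from (Real.sqrt_sq (by norm_num)).symm]
      exact Real.sqrt_le_sqrt (by nlinarith)
    simp only [intervalIntegral.integral_const, smul_eq_mul] at h1
    rw [hpow, ← div_eq_mul_inv]
    have h5 : (1:ℝ) ≤ 3 / Real.sqrt (1+M^2) := (one_le_div h4).mpr (by linarith)
    linarith
  · have hM0 : (0:ℝ) < M := by linarith
    have key : ∫ t in (0:ℝ)..1, (1 + M^2*t^2)⁻¹ = M⁻¹ * Real.arctan M := by
      have h0 : ∀ t : ℝ, (1 + M^2*t^2)⁻¹ = (fun u : ℝ => 1/(1+u^2)) (M*t) := by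
        intro t; simp only [one_div]; ring_nf
      rw [intervalIntegral.integral_congr (g := fun t => (fun u : ℝ => 1/(1+u^2)) (M*t))
        (fun t _ => h0 t)]
      rw [intervalIntegral.integral_comp_mul_left (fun u : ℝ => 1/(1+u^2)) (by positivity : M ≠ 0)]
      simp [integral_one_div_one_add_sq]
    rw [key, hpow]
    have h3 : Real.sqrt (1+M^2) ≤ 3/2 * M := by
      rw [show (3/2:ℝ)*M = Real.sqrt ((3/2*M)^2) from (Real.sqrt_sq (by positivity)).symm]
      exact Real.sqrt_le_sqrt (by nlinarith)
    have h5 : Real.arctan M ≤ π/2 := (Real.arctan_lt_pi_div_two M).le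
    have h6 : π ≤ 4 := Real.pi_le_four
    have h7 : 0 ≤ Real.arctan M := by
      rw [← Real.arctan_zero]
      exact Real.arctan_strictMono.monotone hM
    have h10 : (3/2*M)⁻¹ ≤ (Real.sqrt (1+M^2))⁻¹ := by
      apply inv_anti₀ h4 h3
    have h11 : (3/2*M)⁻¹ = (2/3)*M⁻¹ := by rw [mul_inv]; norm_num
    have h12 : 0 < M⁻¹ := by positivity
    nlinarith


lemma weight_aux {r ε Ca p q nx s : ℝ} (hr1 : 1 ≤ r) (hr2 : r < 2) (hε : 0 < ε)
    (hs0 : 0 ≤ s) (hs1 : s ≤ 1) (hp : 0 ≤ p) (hq : 0 ≤ q) (hnx : 0 ≤ nx)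
    (htri : s*nx ≤ p + q) (hqCa : ε*q ≤ Ca) :
    (1+ε^2*p^2) ^ ((r-3)/2) ≤ 2*(1+Ca^2) * ((1+ε^2*nx^2)^((r-1)/2) * (1+ε^2*nx^2*s^2)⁻¹) := by
  have hCa0 : 0 ≤ Ca := le_trans (by positivity) hqCa
  have hbase1 : (0:ℝ) < 1+ε^2*nx^2*s^2 := by positivity
  have hbase2 : (0:ℝ) < 1+ε^2*p^2 := by positivity
  have hbase3 : (0:ℝ) < 1+ε^2*nx^2 := by positivity
  have hK : (1:ℝ) ≤ 2*(1+Ca^2) := by nlinarith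
  -- step 1: Peetre-type
  have peetre : 1+ε^2*nx^2*s^2 ≤ (2*(1+Ca^2)) * (1+ε^2*p^2) := by
    have h1 : (ε*(s*nx))^2 ≤ (ε*p + ε*q)^2 := by
      apply sq_le_sq'
      · have h2 : 0 ≤ ε*(s*nx) := by positivity
        have h3 : 0 ≤ ε*p := by positivity
        have h4 : 0 ≤ ε*q := by positivity
        linarith
      · nlinarith
    have hq2 : (ε*q)^2 ≤ Ca^2 := pow_le_pow_left₀ (mul_nonneg hε.le hq) hqCa 2
    nlinarith [sq_nonneg (ε*p - ε*q), sq_nonneg (ε*p), mul_nonneg (sq_nonneg (ε*p)) (sq_nonneg Ca)]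
  -- step 2
  have step2 : (1+ε^2*p^2) ^ ((r-3)/2) ≤ (2*(1+Ca^2)) * (1+ε^2*nx^2*s^2) ^ ((r-3)/2) := by
    have e1 : ∀ b : ℝ, 0 < b → b ^ ((r-3)/2) = (b⁻¹) ^ ((3-r)/2) := by
      intro b hb
      rw [show (r-3)/2 = -((3-r)/2) by ring, Real.rpow_neg hb.le, ← Real.inv_rpow hb.le]
    rw [e1 _ hbase2, e1 _ hbase1]
    have hmono : (1+ε^2*p^2)⁻¹ ≤ (2*(1+Ca^2)) * (1+ε^2*nx^2*s^2)⁻¹ := by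
      rw [inv_le_iff_one_le_mul₀' hbase2, ← mul_assoc, ← div_eq_mul_inv, le_div_iff₀ hbase1]
      nlinarith [peetre]
    calc ((1+ε^2*p^2)⁻¹) ^ ((3-r)/2)
        ≤ ((2*(1+Ca^2)) * (1+ε^2*nx^2*s^2)⁻¹) ^ ((3-r)/2) := by
          apply Real.rpow_le_rpow (by positivity) hmono (by linarith)
      _ = (2*(1+Ca^2)) ^ ((3-r)/2) * ((1+ε^2*nx^2*s^2)⁻¹) ^ ((3-r)/2) := by
          rw [Real.mul_rpow (by positivity) (by positivity)]
      _ ≤ (2*(1+Ca^2)) ^ (1:ℝ) * ((1+ε^2*nx^2*s^2)⁻¹) ^ ((3-r)/2) := by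
          apply mul_le_mul_of_nonneg_right _ (by positivity)
          exact Real.rpow_le_rpow_of_exponent_le hK (by linarith)
      _ = (2*(1+Ca^2)) * ((1+ε^2*nx^2*s^2)⁻¹) ^ ((3-r)/2) := by
          rw [Real.rpow_one]
  -- step 3
  have step3 : (1+ε^2*nx^2*s^2) ^ ((r-3)/2)
      ≤ (1+ε^2*nx^2)^((r-1)/2) * (1+ε^2*nx^2*s^2)⁻¹ := by
    have e2 : (1+ε^2*nx^2*s^2) ^ ((r-3)/2)
        = (1+ε^2*nx^2*s^2) ^ ((r-1)/2) * (1+ε^2*nx^2*s^2)⁻¹ := by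
      rw [← Real.rpow_neg_one (1+ε^2*nx^2*s^2), ← Real.rpow_add hbase1]
      ring_nf
    rw [e2]
    apply mul_le_mul_of_nonneg_right _ (by positivity)
    apply Real.rpow_le_rpow hbase1.le _ (by linarith)
    have hs2 : s^2 ≤ 1 := by nlinarith
    nlinarith [sq_nonneg (ε*nx), hs2]
  calc (1+ε^2*p^2) ^ ((r-3)/2) ≤ (2*(1+Ca^2)) * (1+ε^2*nx^2*s^2) ^ ((r-3)/2) := step2
    _ ≤ 2*(1+Ca^2) * ((1+ε^2*nx^2)^((r-1)/2) * (1+ε^2*nx^2*s^2)⁻¹) :=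
        mul_le_mul_of_nonneg_left step3 (by positivity)


variable {d : ℕ}
local notation "E" => EuclideanSpace ℝ (Fin d)

lemma third_deriv_eq (V : E → ℝ) (y u v w : E) :
    fderiv ℝ (fderiv ℝ (fderiv ℝ V)) y u v w = iteratedFDeriv ℝ 3 V y ![u, v, w] := by
  rw [iteratedFDeriv_succ_apply_right, iteratedFDeriv_two_apply]
  simp [Fin.init, Fin.last]

lemma euclid_decomp (x : E) : x = ∑ k, x k • EuclideanSpace.single k 1 := by
  have h := (EuclideanSpace.basisFun (Fin d) ℝ).sum_repr x
  simp only [EuclideanSpace.basisFun_repr, EuclideanSpace.basisFun_apply] at h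
  exact h.symm

lemma coord_le_norm (x : E) (k : Fin d) : |x k| ≤ ‖x‖ := by
  rw [EuclideanSpace.norm_eq]
  have : |x k| = Real.sqrt (|x k|^2) := (Real.sqrt_sq (abs_nonneg _)).symm
  rw [this]
  apply Real.sqrt_le_sqrt
  rw [sq_abs]
  exact Finset.single_le_sum (f := fun i => ‖x i‖^2) (fun i _ => by positivity) (Finset.mem_univ k)
    |>.trans_eq' (by simp [Real.norm_eq_abs, sq_abs])

lemma trilinear_expand (S : E →L[ℝ] E →L[ℝ] E →L[ℝ] ℝ) (x w : E) :
    S x x w = ∑ k, ∑ l, x k * x l * S (EuclideanSpace.single l 1) (EuclideanSpace.single k 1) w := by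
  conv_lhs => rw [euclid_decomp x]
  rw [map_sum]
  simp only [map_smul, ContinuousLinearMap.coe_sum', Finset.sum_apply,
    ContinuousLinearMap.coe_smul', Pi.smul_apply, map_sum, map_smul, smul_eq_mul,
    Finset.mul_sum]
  exact Finset.sum_congr rfl fun k _ => Finset.sum_congr rfl fun l _ => by ring


section helpers
variable {d : ℕ}
local notation "E" => EuclideanSpace ℝ (Fin d)

set_option maxHeartbeats 2000000 in
theorem stmt6_main (d : ℕ) (hd : 1 ≤ d) (C_V C_a : ℝ) (hCV : 0 < C_V) (hCa : 0 < C_a)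
    (r : ℝ) (hr1 : 1 ≤ r) (hr2 : r < 2) (ε : ℝ) (hε : 0 < ε)
    (V : EuclideanSpace ℝ (Fin d) → ℝ) (hV : ContDiff ℝ 3 V)
    (hV3 : ∀ x : EuclideanSpace ℝ (Fin d), ∀ j k l : Fin d,
      |iteratedFDeriv ℝ 3 V x
          ![EuclideanSpace.single j 1, EuclideanSpace.single k 1, EuclideanSpace.single l 1]| ≤
        C_V * ε ^ 3 * (1 + ε ^ 2 * ‖x‖ ^ 2) ^ ((r - 3) / 2))
    (a : EuclideanSpace ℝ (Fin d)) (ha : ε * ‖a‖ ≤ C_a)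
    (x : EuclideanSpace ℝ (Fin d)) (j : Fin d) :
    |fderiv ℝ V (x + a) (EuclideanSpace.single j 1) -
        fderiv ℝ V a (EuclideanSpace.single j 1) -
        iteratedFDeriv ℝ 2 V a ![x, EuclideanSpace.single j 1]| ≤
      (6 * (d:ℝ)^2 * C_V * (1 + C_a^2)) * ε ^ 3 * ‖x‖ ^ 2 *
        (1 + ε ^ 2 * ‖x‖ ^ 2) ^ ((r - 2) / 2) := by
  set e : Fin d → EuclideanSpace ℝ (Fin d) := fun k => EuclideanSpace.single k 1 with he
  set W := fderiv ℝ V with hWdef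
  set U := fderiv ℝ W with hUdef
  set T := fderiv ℝ U with hTdef
  have hW : ContDiff ℝ 2 W := hV.fderiv_right (by norm_num)
  have hU : ContDiff ℝ 1 U := hW.fderiv_right (by norm_num)
  have hTc : Continuous T := hU.continuous_fderiv (by norm_num)
  have hUc : Continuous U := hU.continuous
  have hγc : Continuous (fun t : ℝ => a + t • x) := by continuity
  have hγ : ∀ t : ℝ, HasDerivAt (fun s : ℝ => a + s • x) x t := fun t => by
    simpa using ((hasDerivAt_id t).smul_const x).const_add a
  have hg : ∀ t : ℝ, HasDerivAt (fun s : ℝ => W (a + s • x) (e j))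
      (U (a + t • x) x (e j)) t := by
    intro t
    have h1 : HasFDerivAt W (U (a + t • x)) (a + t • x) :=
      (hW.differentiable (by norm_num) (a + t • x)).hasFDerivAt
    have h3 := (h1.comp_hasDerivAt t (hγ t)).clm_apply (hasDerivAt_const t (e j))
    simpa using h3
  have hh : ∀ t : ℝ, HasDerivAt (fun s : ℝ => U (a + s • x) x (e j))
      (T (a + t • x) x x (e j)) t := by
    intro t
    have h1 : HasFDerivAt U (T (a + t • x)) (a + t • x) :=
      (hU.differentiable (by norm_num) (a + t • x)).hasFDerivAt
    have h3 := ((HasFDerivAt.comp_hasDerivAt (l := U) (l' := T (a + t • x))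
      (f := fun s : ℝ => a + s • x) t h1 (hγ t)).clm_apply (hasDerivAt_const t x)).clm_apply
      (hasDerivAt_const t (e j))
    simpa using h3
  have hcont2 : Continuous (fun s : ℝ => U (a + s • x) x (e j)) :=
    ((hUc.comp hγc).clm_apply continuous_const).clm_apply continuous_const
  have hcont3 : Continuous (fun s : ℝ => T (a + s • x) x x (e j)) :=
    (((hTc.comp hγc).clm_apply continuous_const).clm_apply continuous_const).clm_apply
      continuous_const
  set A : ℝ := 1 + ε^2 * ‖x‖^2 with hA
  have hA0 : (0:ℝ) < A := by positivity
  set Bc : ℝ := C_V * ε^3 * (d:ℝ)^2 * ‖x‖^2 * (2*(1+C_a^2)) * A ^ ((r-1)/2) with hBc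
  have hBc0 : 0 ≤ Bc := by positivity
  have hcontB : Continuous (fun s : ℝ => Bc * (1 + ε^2*‖x‖^2*s^2)⁻¹) := by
    apply continuous_const.mul
    exact (continuous_const.add (continuous_const.mul (continuous_pow 2))).inv₀
      (fun t => by simp only [Pi.add_apply, Pi.mul_apply]; positivity)
  -- pointwise bound on the second derivative of g
  have hptB : ∀ s ∈ Set.Icc (0:ℝ) 1,
      |T (a + s • x) x x (e j)| ≤ Bc * (1 + ε^2*‖x‖^2*s^2)⁻¹ := by
    intro s hs
    have hterm : ∀ k l : Fin d,
        |x k * x l * T (a + s • x) (e l) (e k) (e j)|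
          ≤ ‖x‖^2 * (C_V * ε^3 * (2*(1+C_a^2)) * (A ^ ((r-1)/2) * (1 + ε^2*‖x‖^2*s^2)⁻¹)) := by
      intro k l
      have h3 : |T (a + s • x) (e l) (e k) (e j)|
          ≤ C_V * ε^3 * (1 + ε^2 * ‖a + s • x‖^2) ^ ((r-3)/2) := by
        rw [hTdef, hUdef, hWdef, third_deriv_eq]
        exact hV3 (a + s • x) l k j
      have hQ : (1 + ε^2 * ‖a + s • x‖^2) ^ ((r-3)/2)
          ≤ 2*(1+C_a^2) * (A ^ ((r-1)/2) * (1 + ε^2*‖x‖^2*s^2)⁻¹) := by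
        have htri : s * ‖x‖ ≤ ‖a + s • x‖ + ‖a‖ := by
          have : s • x = (a + s • x) - a := by abel
          calc s * ‖x‖ = ‖s • x‖ := by
                rw [norm_smul, Real.norm_eq_abs, abs_of_nonneg hs.1]
            _ = ‖(a + s • x) - a‖ := by rw [← this]
            _ ≤ ‖a + s • x‖ + ‖a‖ := norm_sub_le _ _
        have hw := weight_aux (Ca := C_a) (p := ‖a + s • x‖) (q := ‖a‖) (nx := ‖x‖) (s := s)
          hr1 hr2 hε hs.1 hs.2 (norm_nonneg _) (norm_nonneg _) (norm_nonneg _) htri ha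
        calc (1 + ε^2 * ‖a + s • x‖^2) ^ ((r-3)/2)
            ≤ 2*(1+C_a^2) * ((1+ε^2*‖x‖^2)^((r-1)/2) * (1+ε^2*‖x‖^2*s^2)⁻¹) := hw
          _ = 2*(1+C_a^2) * (A ^ ((r-1)/2) * (1 + ε^2*‖x‖^2*s^2)⁻¹) := by rw [hA]
      calc |x k * x l * T (a + s • x) (e l) (e k) (e j)|
          = |x k| * |x l| * |T (a + s • x) (e l) (e k) (e j)| := by
            rw [abs_mul, abs_mul]
        _ ≤ ‖x‖ * ‖x‖ * (C_V * ε^3 * ((1 + ε^2 * ‖a + s • x‖^2) ^ ((r-3)/2))) := by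
            apply mul_le_mul
            · exact mul_le_mul (coord_le_norm x k) (coord_le_norm x l) (abs_nonneg _)
                (norm_nonneg _)
            · simpa [mul_assoc] using h3
            · exact abs_nonneg _
            · positivity
        _ ≤ ‖x‖ * ‖x‖ * (C_V * ε^3 * (2*(1+C_a^2) * (A ^ ((r-1)/2) * (1 + ε^2*‖x‖^2*s^2)⁻¹))) := by
            apply mul_le_mul_of_nonneg_left _ (by positivity)
            exact mul_le_mul_of_nonneg_left hQ (by positivity)
        _ = ‖x‖^2 * (C_V * ε^3 * (2*(1+C_a^2)) * (A ^ ((r-1)/2) * (1 + ε^2*‖x‖^2*s^2)⁻¹)) := by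
            ring
    calc |T (a + s • x) x x (e j)|
        = |∑ k, ∑ l, x k * x l * T (a + s • x) (e l) (e k) (e j)| := by
          rw [trilinear_expand]
      _ ≤ ∑ k, ∑ l, |x k * x l * T (a + s • x) (e l) (e k) (e j)| := by
          refine (Finset.abs_sum_le_sum_abs _ _).trans ?_
          exact Finset.sum_le_sum fun k _ => Finset.abs_sum_le_sum_abs _ _
      _ ≤ ∑ k : Fin d, ∑ l : Fin d,
            ‖x‖^2 * (C_V * ε^3 * (2*(1+C_a^2)) * (A ^ ((r-1)/2) * (1 + ε^2*‖x‖^2*s^2)⁻¹)) := by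
          exact Finset.sum_le_sum fun k _ => Finset.sum_le_sum fun l _ => hterm k l
      _ = Bc * (1 + ε^2*‖x‖^2*s^2)⁻¹ := by
          simp [Finset.sum_const, Finset.card_univ, hBc]
          ring
  -- the integral bound
  set IB : ℝ := ∫ s in (0:ℝ)..1, Bc * (1 + ε^2*‖x‖^2*s^2)⁻¹ with hIB
  have hIB0 : 0 ≤ IB := by
    rw [hIB]
    apply intervalIntegral.integral_nonneg (by norm_num)
    intro s _
    positivity
  -- first FTC step
  have hstep1 : ∀ t ∈ Set.Icc (0:ℝ) 1,
      |U (a + t • x) x (e j) - U (a + (0:ℝ) • x) x (e j)| ≤ IB := by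
    intro t ht
    have hftc : ∫ s in (0:ℝ)..t, T (a + s • x) x x (e j)
        = U (a + t • x) x (e j) - U (a + (0:ℝ) • x) x (e j) :=
      intervalIntegral.integral_eq_sub_of_hasDerivAt (fun s _ => hh s)
        (hcont3.intervalIntegrable 0 t)
    rw [← hftc]
    have h1 : |∫ s in (0:ℝ)..t, T (a + s • x) x x (e j)|
        ≤ ∫ s in (0:ℝ)..t, Bc * (1 + ε^2*‖x‖^2*s^2)⁻¹ := by
      have hae : ∀ᵐ s ∂MeasureTheory.volume.restrict (Set.uIoc (0:ℝ) t),
          ‖T (a + s • x) x x (e j)‖ ≤ Bc * (1 + ε^2*‖x‖^2*s^2)⁻¹ := by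
        apply MeasureTheory.ae_restrict_of_forall_mem measurableSet_uIoc
        intro s hsm
        have hs : s ∈ Set.Icc (0:ℝ) 1 := by
          rw [Set.uIoc_of_le ht.1] at hsm
          exact ⟨hsm.1.le, hsm.2.trans ht.2⟩
        exact hptB s hs
      have hb := intervalIntegral.norm_integral_le_of_norm_le ht.1
        (by rw [Set.uIoc_of_le ht.1, MeasureTheory.ae_restrict_iff' measurableSet_Ioc] at hae; exact hae)
        (hcontB.intervalIntegrable 0 t)
      have hnn : 0 ≤ ∫ s in (0:ℝ)..t, Bc * (1 + ε^2*‖x‖^2*s^2)⁻¹ :=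
        intervalIntegral.integral_nonneg ht.1 (fun s _ => by positivity)
      rw [Real.norm_eq_abs] at hb
      exact hb
    refine h1.trans ?_
    rw [hIB]
    apply intervalIntegral.integral_mono_interval le_rfl ht.1 ht.2 _
      (hcontB.intervalIntegrable 0 1)
    apply MeasureTheory.ae_of_all
    intro s
    positivity
  -- second FTC step
  have hftc2 : ∫ t in (0:ℝ)..1, (U (a + t • x) x (e j) - U (a + (0:ℝ) • x) x (e j))
      = (W (a + (1:ℝ) • x) (e j) - 1 * (U (a + (0:ℝ) • x) x (e j)))
        - (W (a + (0:ℝ) • x) (e j) - 0 * (U (a + (0:ℝ) • x) x (e j))) := by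
    apply intervalIntegral.integral_eq_sub_of_hasDerivAt
      (f := fun t => W (a + t • x) (e j) - t * (U (a + (0:ℝ) • x) x (e j)))
    · intro t _
      exact (hg t).sub (hasDerivAt_mul_const _)
    · exact (hcont2.sub continuous_const).intervalIntegrable 0 1
  have hmain : |W (x + a) (e j) - W a (e j) - U a x (e j)| ≤ IB := by
    have he1 : a + (1:ℝ) • x = x + a := by rw [one_smul]; abel
    have he0 : a + (0:ℝ) • x = a := by rw [zero_smul, add_zero]
    have h2 : |∫ t in (0:ℝ)..1, (U (a + t • x) x (e j) - U (a + (0:ℝ) • x) x (e j))| ≤ IB := by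
      have hae : ∀ᵐ t ∂MeasureTheory.volume.restrict (Set.uIoc (0:ℝ) 1),
          ‖U (a + t • x) x (e j) - U (a + (0:ℝ) • x) x (e j)‖ ≤ (fun _ : ℝ => IB) t := by
        apply MeasureTheory.ae_restrict_of_forall_mem measurableSet_uIoc
        intro t htm
        have ht : t ∈ Set.Icc (0:ℝ) 1 := by
          rw [Set.uIoc_of_le (by norm_num : (0:ℝ) ≤ 1)] at htm
          exact ⟨htm.1.le, htm.2⟩
        exact hstep1 t ht
      have hb := intervalIntegral.norm_integral_le_of_norm_le zero_le_one
        (by rw [Set.uIoc_of_le zero_le_one, MeasureTheory.ae_restrict_iff' measurableSet_Ioc] at hae; exact hae)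
        (intervalIntegrable_const)
      simp only [intervalIntegral.integral_const, smul_eq_mul, sub_zero, one_mul,
        Real.norm_eq_abs, abs_of_nonneg hIB0] at hb
      exact hb
    rw [hftc2] at h2
    rw [he1, he0] at h2
    rw [show W (x + a) (e j) - 1 * (U a x (e j)) - (W a (e j) - 0 * (U a x (e j)))
      = W (x + a) (e j) - W a (e j) - U a x (e j) from by ring] at h2
    exact h2
  -- conclude
  have hfinal : IB ≤ (6 * (d:ℝ)^2 * C_V * (1 + C_a^2)) * ε^3 * ‖x‖^2 * A ^ ((r-2)/2) := by
    have hM : (0:ℝ) ≤ ε * ‖x‖ := by positivity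
    have hIA := integral_aux hM
    have hMA : 1 + (ε*‖x‖)^2 = A := by rw [hA]; ring
    rw [hMA] at hIA
    have hIBeq : IB = Bc * ∫ s in (0:ℝ)..1, (1 + (ε*‖x‖)^2*s^2)⁻¹ := by
      rw [hIB, ← intervalIntegral.integral_const_mul]
      apply intervalIntegral.integral_congr
      intro s _
      ring_nf
    rw [hIBeq]
    calc Bc * ∫ s in (0:ℝ)..1, (1 + (ε*‖x‖)^2*s^2)⁻¹
        ≤ Bc * (3 * A ^ (-(1:ℝ)/2)) := by
          apply mul_le_mul_of_nonneg_left hIA hBc0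
      _ = (6 * (d:ℝ)^2 * C_V * (1 + C_a^2)) * ε^3 * ‖x‖^2 *
            (A ^ ((r-1)/2) * A ^ (-(1:ℝ)/2)) := by rw [hBc]; ring
      _ = (6 * (d:ℝ)^2 * C_V * (1 + C_a^2)) * ε^3 * ‖x‖^2 * A ^ ((r-2)/2) := by
          rw [← Real.rpow_add hA0]
          congr 1
          congr 1
          ring
  have h2a : iteratedFDeriv ℝ 2 V a ![x, EuclideanSpace.single j 1] = U a x (e j) := by
    rw [iteratedFDeriv_two_apply]
    simp [hUdef, hWdef, he]
  simp only [he] at hmain h2a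
  rw [h2a]
  exact hmain.trans hfinal
end helpers


/-- Case (ii) of Lemma B.1 (lem:RVup): there is a constant `C₂ > 0`, depending only on
`C_V`, `d` and `C_a`, such that for every `1 ≤ r < 2`, every `ε > 0`, every `C³`
potential `V` on `ℝ^d` with `|∂_j∂_k∂_l V(x)| ≤ C_V ε³ (1+ε²|x|²)^((r−3)/2)`, every
`a` with `ε|a| ≤ C_a`, every `x` and every `j`,
`|∂_j V(x+a) − ∂_j V(a) − Σ_k ∂_k∂_j V(a) x_k| ≤ C₂ ε³ |x|² (1+ε²|x|²)^((r−2)/2)`. -/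
theorem stmt_6 (d : ℕ) (hd : 1 ≤ d) (C_V C_a : ℝ) (hCV : 0 < C_V) (hCa : 0 < C_a) :
    ∃ C₂ : ℝ, 0 < C₂ ∧
      ∀ r : ℝ, 1 ≤ r → r < 2 → ∀ ε : ℝ, 0 < ε →
      ∀ V : EuclideanSpace ℝ (Fin d) → ℝ, ContDiff ℝ 3 V →
      (∀ x : EuclideanSpace ℝ (Fin d), ∀ j k l : Fin d,
        |iteratedFDeriv ℝ 3 V x
            ![EuclideanSpace.single j 1, EuclideanSpace.single k 1, EuclideanSpace.single l 1]| ≤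
          C_V * ε ^ 3 * (1 + ε ^ 2 * ‖x‖ ^ 2) ^ ((r - 3) / 2)) →
      ∀ a : EuclideanSpace ℝ (Fin d), ε * ‖a‖ ≤ C_a →
      ∀ x : EuclideanSpace ℝ (Fin d), ∀ j : Fin d,
        |fderiv ℝ V (x + a) (EuclideanSpace.single j 1) -
            fderiv ℝ V a (EuclideanSpace.single j 1) -
            iteratedFDeriv ℝ 2 V a ![x, EuclideanSpace.single j 1]| ≤
          C₂ * ε ^ 3 * ‖x‖ ^ 2 * (1 + ε ^ 2 * ‖x‖ ^ 2) ^ ((r - 2) / 2) := by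
  refine ⟨6 * (d:ℝ)^2 * C_V * (1 + C_a^2), ?_, ?_⟩
  · have hd0 : (0:ℝ) < (d:ℝ) := by exact_mod_cast hd
    have h1 : (0:ℝ) < (d:ℝ)^2 := by positivity
    have h2 : (0:ℝ) < 1 + C_a^2 := by positivity
    have h3 : (0:ℝ) < 6 * (d:ℝ)^2 * C_V * (1 + C_a^2) :=
      mul_pos (mul_pos (mul_pos (by norm_num) h1) hCV) h2
    exact h3
  · intro r hr1 hr2 ε hε V hV hV3 a ha x j
    exact stmt6_main d hd C_V C_a hCV hCa r hr1 hr2 ε hε V hV hV3 a ha x j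
end

section
/- Let d ≥ 1, r ≥ 1, ε > 0, C_V > 0 and C_a > 0 be real numbers and let V : ℝ^d → ℝ be twice continuously differentiable such that for all x ∈ ℝ^d: |∇V(x)| ≤ C_V ε (1+ε²|x|²)^((r−1)/2) and |ξ · (Hess V(x)) ξ| ≤ C_V ε² (1+ε²|x|²)^((r−2)/2) |ξ|² for all ξ ∈ ℝ^d. Then for every a ∈ ℝ^d with ε|a| ≤ C_a and every x ∈ ℝ^d, V(x+a) − V(a) − ∇V(a)·x ≤ C₁ (1 + ε²|x|² (1+ε²|x|²)^((r−2)/2)), where C₁ := 2 C_V (2+2C_a²)^((r−1)/2). -/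
set_option maxHeartbeats 4000000 in
/-- Lemma B.5 (lem:VRup2): for `r ≥ 1`, a `C²` potential `V` on `ℝ^d` with
`|∇V(x)| ≤ C_V ε (1+ε²|x|²)^((r−1)/2)` and
`|ξ·(Hess V(x))ξ| ≤ C_V ε² (1+ε²|x|²)^((r−2)/2)|ξ|²`, and `a` with `ε|a| ≤ C_a`,
the Taylor remainder satisfies
`V(x+a) − V(a) − ∇V(a)·x ≤ C₁ (1 + ε²|x|² (1+ε²|x|²)^((r−2)/2))`
with `C₁ = 2 C_V (2+2C_a²)^((r−1)/2)`. -/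
theorem stmt_8 (d : ℕ) (hd : 1 ≤ d) (ε r C_V C_a : ℝ) (hε : 0 < ε) (hr : 1 ≤ r)
    (hCV : 0 < C_V) (hCa : 0 < C_a)
    (V : EuclideanSpace ℝ (Fin d) → ℝ) (hV : ContDiff ℝ 2 V)
    (hgrad : ∀ x : EuclideanSpace ℝ (Fin d),
      ‖gradient V x‖ ≤ C_V * ε * (1 + ε ^ 2 * ‖x‖ ^ 2) ^ ((r - 1) / 2))
    (hHess : ∀ x ξ : EuclideanSpace ℝ (Fin d),
      |iteratedFDeriv ℝ 2 V x ![ξ, ξ]| ≤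
        C_V * ε ^ 2 * (1 + ε ^ 2 * ‖x‖ ^ 2) ^ ((r - 2) / 2) * ‖ξ‖ ^ 2) :
    ∀ a : EuclideanSpace ℝ (Fin d), ε * ‖a‖ ≤ C_a →
    ∀ x : EuclideanSpace ℝ (Fin d),
      V (x + a) - V a - fderiv ℝ V a x ≤
        (2 * C_V * (2 + 2 * C_a ^ 2) ^ ((r - 1) / 2)) *
          (1 + ε ^ 2 * ‖x‖ ^ 2 * (1 + ε ^ 2 * ‖x‖ ^ 2) ^ ((r - 2) / 2)) := by
  intro a ha x
  have hVd : Differentiable ℝ V := hV.differentiable (by norm_num)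
  set W := fderiv ℝ V with hWdef
  have hWd : Differentiable ℝ W := (hV.fderiv_right (m := 1) (by norm_num)).differentiable (by norm_num)
  set u2 : ℝ := ε ^ 2 * ‖x‖ ^ 2 with hu2
  have hu2nn : 0 ≤ u2 := by positivity
  have h1u2 : (1:ℝ) ≤ 1 + u2 := by linarith
  set K : ℝ := 2 + 2 * C_a ^ 2 with hK
  have hK1 : (1:ℝ) ≤ K := by nlinarith
  -- domination on the segment
  have hdom : ∀ t : ℝ, t ∈ Set.Icc (0:ℝ) 1 →
      1 + ε ^ 2 * ‖a + t • x‖ ^ 2 ≤ K * (1 + u2) := by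
    intro t ht
    have h1 : ‖a + t • x‖ ≤ ‖a‖ + ‖x‖ := by
      have h2 : ‖t • x‖ = |t| * ‖x‖ := by rw [norm_smul, Real.norm_eq_abs]
      have h3 : |t| ≤ 1 := abs_le.2 ⟨by linarith [ht.1], ht.2⟩
      calc ‖a + t • x‖ ≤ ‖a‖ + ‖t • x‖ := norm_add_le _ _
        _ ≤ ‖a‖ + ‖x‖ := by nlinarith [norm_nonneg x]
    have h5 : ε ^ 2 * ‖a + t • x‖ ^ 2 ≤ ε ^ 2 * (‖a‖ + ‖x‖) ^ 2 := by
      have h0 := norm_nonneg (a + t • x)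
      have := pow_le_pow_left₀ h0 h1 2
      nlinarith [sq_nonneg ε]
    have h6 : (ε * ‖a‖) ^ 2 ≤ C_a ^ 2 := by
      have : 0 ≤ ε * ‖a‖ := by positivity
      nlinarith
    nlinarith [sq_nonneg (‖a‖ - ‖x‖), sq_nonneg C_a, mul_nonneg (sq_nonneg C_a) hu2nn,
      sq_nonneg ε, mul_nonneg (mul_nonneg (sq_nonneg ε) (norm_nonneg a)) (norm_nonneg x)]
  have hKpos : (0:ℝ) < K * (1 + u2) := by nlinarith
  -- monotone rpow domination for nonneg exponent p
  have hpow : ∀ p : ℝ, 0 ≤ p → ∀ t : ℝ, t ∈ Set.Icc (0:ℝ) 1 →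
      (1 + ε ^ 2 * ‖a + t • x‖ ^ 2) ^ p ≤ K ^ p * (1 + u2) ^ p := by
    intro p hp t ht
    have h1 : (1 + ε ^ 2 * ‖a + t • x‖ ^ 2) ^ p ≤ (K * (1 + u2)) ^ p :=
      Real.rpow_le_rpow (by positivity) (hdom t ht) hp
    rwa [Real.mul_rpow (by linarith) (by linarith)] at h1
  -- line and derivatives
  have hline : ∀ t : ℝ, HasDerivAt (fun s : ℝ => a + s • x) x t := fun t => by
    simpa using ((hasDerivAt_id t).smul_const x).const_add a
  set g : ℝ → ℝ := fun t => V (a + t • x) with hg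
  have hg' : ∀ t : ℝ, HasDerivAt g (W (a + t • x) x) t := fun t =>
    (hVd (a + t • x)).hasFDerivAt.comp_hasDerivAt t (hline t)
  set φ : ℝ → ℝ := fun t => W (a + t • x) x with hφ
  have hφ' : ∀ t : ℝ, HasDerivAt φ (fderiv ℝ W (a + t • x) x x) t := by
    intro t
    have h1 : HasDerivAt (fun s : ℝ => W (a + s • x)) (fderiv ℝ W (a + t • x) x) t :=
      (hWd (a + t • x)).hasFDerivAt.comp_hasDerivAt t (hline t)
    have h2 := h1.clm_apply (hasDerivAt_const t x)
    rw [map_zero, add_zero] at h2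
    exact h2
  have hφ0 : φ 0 = W a x := by simp [hφ]
  have hg0 : g 0 = V a := by simp [hg]
  have hg1 : g 1 = V (x + a) := by simp [hg, add_comm]
  -- gradient norm = fderiv norm
  have hWn : ∀ z, ‖W z‖ ≤ C_V * ε * (1 + ε ^ 2 * ‖z‖ ^ 2) ^ ((r - 1) / 2) := by
    intro z
    have : ‖gradient V z‖ = ‖W z‖ := by rw [gradient]; exact LinearIsometryEquiv.norm_map _ _
    rw [← this]; exact hgrad z
  have hHess' : ∀ z, |fderiv ℝ W z x x| ≤
      C_V * ε ^ 2 * (1 + ε ^ 2 * ‖z‖ ^ 2) ^ ((r - 2) / 2) * ‖x‖ ^ 2 := by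
    intro z
    have h1 := hHess z x
    rwa [iteratedFDeriv_two_apply, show (![x, x] : Fin 2 → EuclideanSpace ℝ (Fin d)) 0 = x from rfl,
      show (![x, x] : Fin 2 → EuclideanSpace ℝ (Fin d)) 1 = x from rfl] at h1
  set p : ℝ := (r - 1) / 2 with hp
  set q : ℝ := (r - 2) / 2 with hq
  have hpnn : 0 ≤ p := by simp only [hp]; linarith
  have hKp : (0:ℝ) < K ^ p := Real.rpow_pos_of_pos (by linarith) p
  have hKqp : K ^ q ≤ K ^ p := Real.rpow_le_rpow_of_exponent_le hK1 (by simp [hp, hq]; linarith)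
  have hXnn : (0:ℝ) ≤ (1 + u2) ^ q := Real.rpow_nonneg (by linarith) q
  rcases le_total r 2 with hr2 | hr2
  · -- case 1 ≤ r ≤ 2 : gradient route
    have hM : ∀ t : ℝ, t ∈ Set.Icc (0:ℝ) 1 →
        ‖W (a + t • x) x‖ ≤ C_V * ε * (K ^ p * (1 + u2) ^ p) * ‖x‖ := by
      intro t ht
      calc ‖W (a + t • x) x‖ ≤ ‖W (a + t • x)‖ * ‖x‖ := (W (a + t • x)).le_opNorm x
        _ ≤ (C_V * ε * (1 + ε ^ 2 * ‖a + t • x‖ ^ 2) ^ p) * ‖x‖ := by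
            gcongr; exact hWn _
        _ ≤ C_V * ε * (K ^ p * (1 + u2) ^ p) * ‖x‖ := by
            have := hpow p hpnn t ht
            have hcc : (0:ℝ) ≤ C_V * ε := by positivity
            nlinarith [norm_nonneg x, mul_nonneg hcc (norm_nonneg x)]
    have hmv : ‖g 1 - g 0‖ ≤ C_V * ε * (K ^ p * (1 + u2) ^ p) * ‖x‖ * ‖(1:ℝ) - 0‖ := by
      apply Convex.norm_image_sub_le_of_norm_hasDerivWithin_le
        (f' := fun t => W (a + t • x) x)
        (fun t ht => (hg' t).hasDerivWithinAt) hM (convex_Icc 0 1)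
        (by norm_num) (by norm_num)
    have hWa : ‖W a x‖ ≤ C_V * ε * (K ^ p * (1 + u2) ^ p) * ‖x‖ := by
      have := hM 0 (by norm_num)
      simpa using this
    have hkey : ε * ‖x‖ * (1 + u2) ^ p ≤ 1 + u2 * (1 + u2) ^ q := by
      have hsplit : (1 + u2) ^ p = (1 + u2) ^ ((1:ℝ)/2) * (1 + u2) ^ q := by
        rw [← Real.rpow_add (by linarith), hp, hq]; ring_nf
      have hux : ε * ‖x‖ ≤ (1 + u2) ^ ((1:ℝ)/2) := by
        have h1 : (ε * ‖x‖) ^ 2 ≤ ((1 + u2) ^ ((1:ℝ)/2)) ^ 2 := by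
          rw [← Real.rpow_natCast ((1 + u2) ^ ((1:ℝ)/2)) 2, ← Real.rpow_mul (by linarith)]
          norm_num
          nlinarith
        have h2 : 0 ≤ (1 + u2) ^ ((1:ℝ)/2) := Real.rpow_nonneg (by linarith) _
        nlinarith [mul_nonneg hε.le (norm_nonneg x)]
      have hhalf : (1 + u2) ^ ((1:ℝ)/2) * (1 + u2) ^ ((1:ℝ)/2) = 1 + u2 := by
        rw [← Real.rpow_add (by linarith)]; norm_num
      have hq1 : (1 + u2) ^ q ≤ 1 :=
        Real.rpow_le_one_of_one_le_of_nonpos h1u2 (by simp [hq]; linarith)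
      calc ε * ‖x‖ * (1 + u2) ^ p = ε * ‖x‖ * ((1 + u2) ^ ((1:ℝ)/2) * (1 + u2) ^ q) := by
            rw [hsplit]
        _ ≤ (1 + u2) ^ ((1:ℝ)/2) * ((1 + u2) ^ ((1:ℝ)/2) * (1 + u2) ^ q) := by
            refine mul_le_mul_of_nonneg_right hux ?_
            exact mul_nonneg (Real.rpow_nonneg (by linarith) _) hXnn
        _ = (1 + u2) * (1 + u2) ^ q := by rw [← mul_assoc, hhalf]
        _ = (1 + u2) ^ q + u2 * (1 + u2) ^ q := by ring
        _ ≤ 1 + u2 * (1 + u2) ^ q := by linarith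
    have hfinal : V (x + a) - V a - W a x ≤ 2 * (C_V * ε * (K ^ p * (1 + u2) ^ p) * ‖x‖) := by
      have h1 : g 1 - g 0 ≤ C_V * ε * (K ^ p * (1 + u2) ^ p) * ‖x‖ := by
        have := hmv
        rw [show ‖(1:ℝ) - 0‖ = 1 by norm_num, mul_one] at this
        calc g 1 - g 0 ≤ ‖g 1 - g 0‖ := le_abs_self _
          _ ≤ _ := this
      have h2 : -(W a x) ≤ C_V * ε * (K ^ p * (1 + u2) ^ p) * ‖x‖ :=
        (neg_le_abs _).trans hWa
      rw [← hg1, ← hg0]; linarith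
    calc V (x + a) - V a - W a x ≤ 2 * (C_V * ε * (K ^ p * (1 + u2) ^ p) * ‖x‖) := hfinal
      _ = 2 * C_V * K ^ p * (ε * ‖x‖ * (1 + u2) ^ p) := by ring
      _ ≤ 2 * C_V * K ^ p * (1 + u2 * (1 + u2) ^ q) := by
          refine mul_le_mul_of_nonneg_left hkey ?_
          have : (0:ℝ) ≤ 2 * C_V := by linarith
          exact mul_nonneg this hKp.le
  · -- case r ≥ 2 : Hessian route
    set M : ℝ := C_V * ε ^ 2 * (K ^ q * (1 + u2) ^ q) * ‖x‖ ^ 2 with hM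
    have hqnn : 0 ≤ q := by simp [hq]; linarith
    have hMb : ∀ t : ℝ, t ∈ Set.Icc (0:ℝ) 1 → ‖fderiv ℝ W (a + t • x) x x‖ ≤ M := by
      intro t ht
      rw [Real.norm_eq_abs]
      calc |fderiv ℝ W (a + t • x) x x| ≤
          C_V * ε ^ 2 * (1 + ε ^ 2 * ‖a + t • x‖ ^ 2) ^ q * ‖x‖ ^ 2 := hHess' _
        _ ≤ M := by
            rw [hM]
            have := hpow q hqnn t ht
            have hcc : (0:ℝ) ≤ C_V * ε ^ 2 := by positivity
            nlinarith [sq_nonneg ‖x‖, mul_nonneg hcc (sq_nonneg ‖x‖)]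
    have hφmv : ∀ t : ℝ, t ∈ Set.Icc (0:ℝ) 1 → ‖φ t - φ 0‖ ≤ M * ‖t - 0‖ := by
      intro t ht
      exact Convex.norm_image_sub_le_of_norm_hasDerivWithin_le
        (fun s hs => (hφ' s).hasDerivWithinAt) hMb (convex_Icc 0 1) (by norm_num) ht
    set h : ℝ → ℝ := fun t => g t - t * φ 0 with hh
    have hh' : ∀ t : ℝ, HasDerivAt h (φ t - φ 0) t := by
      intro t
      have h0 := (hg' t).sub ((hasDerivAt_id t).mul_const (φ 0))
      rw [one_mul] at h0
      exact h0
    have hhb : ∀ t : ℝ, t ∈ Set.Icc (0:ℝ) 1 → ‖φ t - φ 0‖ ≤ M := by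
      intro t ht
      have h1 := hφmv t ht
      have h2 : ‖t - 0‖ ≤ 1 := by
        rw [Real.norm_eq_abs, sub_zero]
        exact abs_le.2 ⟨by linarith [ht.1], ht.2⟩
      have hMnn : 0 ≤ M := by positivity
      nlinarith [norm_nonneg (φ t - φ 0)]
    have hmv2 : ‖h 1 - h 0‖ ≤ M * ‖(1:ℝ) - 0‖ :=
      Convex.norm_image_sub_le_of_norm_hasDerivWithin_le
        (fun s hs => (hh' s).hasDerivWithinAt) hhb (convex_Icc 0 1) (by norm_num) (by norm_num)
    have hdiff : h 1 - h 0 = V (x + a) - V a - W a x := by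
      simp only [hh, hg0, hg1, hφ0]; ring
    have h1 : V (x + a) - V a - W a x ≤ M := by
      rw [← hdiff]
      calc h 1 - h 0 ≤ ‖h 1 - h 0‖ := le_abs_self _
        _ ≤ M * ‖(1:ℝ) - 0‖ := hmv2
        _ = M := by norm_num
    calc V (x + a) - V a - W a x ≤ M := h1
      _ = C_V * K ^ q * (u2 * (1 + u2) ^ q) := by simp only [hM, hu2]; ring
      _ ≤ 2 * C_V * K ^ p * (1 + u2 * (1 + u2) ^ q) := by
          have h2 : u2 * (1 + u2) ^ q ≤ 1 + u2 * (1 + u2) ^ q := by linarith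
          have h3 : 0 ≤ u2 * (1 + u2) ^ q := mul_nonneg hu2nn hXnn
          have h4 : K ^ q * (u2 * (1 + u2) ^ q) ≤ K ^ p * (1 + u2 * (1 + u2) ^ q) :=
            mul_le_mul hKqp h2 h3 hKp.le
          have h6 := mul_le_mul_of_nonneg_left h4 hCV.le
          have h5 : 0 ≤ C_V * (K ^ p * (1 + u2 * (1 + u2) ^ q)) :=
            mul_nonneg hCV.le (mul_nonneg hKp.le (by linarith))
          nlinarith [h6, h5]
end

section
/- Let d ≥ 1, r ≥ 1, and let C_V, c_V, c_L, C_E be positive real numbers. There exist positive constants C_a and C_p, depending only on c_L, c_V, C_V, d, r and C_E, with the following property. Let 0 < ε ≤ C_E, let V : ℝ^d → [0,∞) be continuously differentiable with |∂_j V(x)| ≤ C_V ε (1+ε²|x|²)^((r−1)/2) for all x ∈ ℝ^d and all j, and with V(x) ≥ c_V (ε|x|)^r whenever ε|x| ≥ c_L. Let a, p : [0,T] → ℝ^d be continuously differentiable, set α^tr(t) := a'(t) − 2p(t), α^b(t) := −p'(t) − ∇V(a(t)), |α(t)| := (|α^tr(t)|² + |α^b(t)|²)^(1/2), ᾱ(t)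 := sup_{0≤s≤t} |α(s)|, and h₀ := (|p(0)|² + V(a(0)))/2, and assume h₀ ≤ C_E. Set C_{T₁} := c_V / (2^(max(2,r−1)/2) C_V d). Then for every t ∈ [0,T] with t ≤ C_{T₁} / ((ε² + ᾱ(t))(1 + ε + h₀)), one has ε|a(t)| ≤ C_a and |p(t)| ≤ C_p (√h₀ + ᾱ(t)·t + ε). -/
open Set Real
open scoped RealInnerProductSpace

/-- AM–GM for square roots. -/
lemma sqrt_mul_le_half_add' {x y : ℝ} (hx : 0 ≤ x) (hy : 0 ≤ y) :
    Real.sqrt (x * y) ≤ (x + y) / 2 := by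
  nlinarith [sq_nonneg (Real.sqrt x - Real.sqrt y), Real.sq_sqrt hx, Real.sq_sqrt hy,
    Real.sqrt_nonneg x, Real.sqrt_nonneg y, Real.sqrt_mul hx y]

/-- Subadditivity of the square root. -/
lemma sqrt_add_le' {x y : ℝ} (hx : 0 ≤ x) (hy : 0 ≤ y) :
    Real.sqrt (x + y) ≤ Real.sqrt x + Real.sqrt y := by
  have h := Real.sqrt_le_sqrt (show x + y ≤ (Real.sqrt x + Real.sqrt y) ^ 2 by
    nlinarith [Real.sq_sqrt hx, Real.sq_sqrt hy, Real.sqrt_nonneg x, Real.sqrt_nonneg y])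
  rwa [Real.sqrt_sq (by positivity)] at h

/-- A coordinatewise bound gives a Euclidean norm bound. -/
lemma norm_le_sqrt_card' {d : ℕ} (y : EuclideanSpace ℝ (Fin d)) (B : ℝ) (hB : 0 ≤ B)
    (h : ∀ j, |y j| ≤ B) : ‖y‖ ≤ Real.sqrt d * B := by
  rw [EuclideanSpace.norm_eq]
  have h1 : (∑ i, ‖y i‖ ^ 2) ≤ (d : ℝ) * B ^ 2 := by
    calc (∑ i, ‖y i‖ ^ 2) ≤ ∑ _i : Fin d, B ^ 2 := by
          apply Finset.sum_le_sum; intro i _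
          have := h i
          rw [Real.norm_eq_abs]
          nlinarith [abs_nonneg (y i)]
      _ = (d : ℝ) * B ^ 2 := by simp [Finset.sum_const, nsmul_eq_mul]
  calc Real.sqrt (∑ i, ‖y i‖ ^ 2) ≤ Real.sqrt ((d:ℝ) * B ^ 2) := Real.sqrt_le_sqrt h1
    _ = Real.sqrt d * B := by rw [Real.sqrt_mul (by positivity), Real.sqrt_sq hB]

/-- `x ^ θ ≤ 1 + x` for `x ≥ 0` and `0 ≤ θ ≤ 1`. -/
lemma rpow_le_one_add' {x θ : ℝ} (hx : 0 ≤ x) (hθ : 0 ≤ θ) (hθ1 : θ ≤ 1) :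
    x ^ θ ≤ 1 + x := by
  rcases le_total x 1 with h | h
  · have := Real.rpow_le_one hx h hθ
    linarith
  · have h2 : x ^ θ ≤ x ^ (1:ℝ) := Real.rpow_le_rpow_of_exponent_le h hθ1
    rw [Real.rpow_one] at h2
    linarith

/-- The key sublinear-in-energy bound for `(1 + z²)^((r−1)/2)` under coercivity. -/
lemma key_rpow_bound (r c_V c_L : ℝ) (hr : 1 ≤ r) (hcV : 0 < c_V)
    (z h : ℝ) (hz0 : 0 ≤ z) (hh : 0 ≤ h)
    (hfar : c_L ≤ z → c_V * z ^ r ≤ 2 * h) :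
    (1 + z ^ 2) ^ ((r - 1) / 2) ≤
      ((1 + c_L ^ 2) ^ ((r - 1) / 2) * (2:ℝ) ^ ((r - 1) / 2) * (2 + 2 / c_V)) * (1 + h) := by
  have hrpos : (0:ℝ) < r := by linarith
  have hq : 0 ≤ (r - 1) / 2 := by linarith
  have h2q1 : 1 ≤ (2:ℝ) ^ ((r - 1) / 2) := Real.one_le_rpow one_le_two hq
  have hcl1 : 1 ≤ (1 + c_L ^ 2) ^ ((r - 1) / 2) :=
    Real.one_le_rpow (by nlinarith [sq_nonneg c_L]) hq
  have hfactor : 1 ≤ (2:ℝ) ^ ((r - 1) / 2) * (2 + 2 / c_V) := by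
    have h2c : (0:ℝ) < 2 / c_V := by positivity
    have hone : (1:ℝ) ≤ 2 + 2 / c_V := by linarith
    have := mul_le_mul h2q1 hone zero_le_one (by linarith)
    linarith
  rcases le_total z c_L with hcase | hcase
  · calc (1 + z ^ 2) ^ ((r - 1) / 2) ≤ (1 + c_L ^ 2) ^ ((r - 1) / 2) :=
        Real.rpow_le_rpow (by positivity)
          (by have := pow_le_pow_left₀ hz0 hcase 2; linarith) hq
      _ ≤ (1 + c_L ^ 2) ^ ((r - 1) / 2) * ((2:ℝ) ^ ((r - 1) / 2) * (2 + 2 / c_V)) :=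
        le_mul_of_one_le_right (by linarith) hfactor
      _ = (1 + c_L ^ 2) ^ ((r - 1) / 2) * (2:ℝ) ^ ((r - 1) / 2) * (2 + 2 / c_V) := by ring
      _ ≤ ((1 + c_L ^ 2) ^ ((r - 1) / 2) * (2:ℝ) ^ ((r - 1) / 2) * (2 + 2 / c_V)) * (1 + h) := by
        apply le_mul_of_one_le_right _ (by linarith)
        have h2c : (0:ℝ) < 2 + 2 / c_V := by positivity
        positivity
  · have hVz := hfar hcase
    have hzr : z ^ r ≤ 2 * h / c_V := by
      rw [le_div_iff₀ hcV]
      linarith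
    set w := 2 * h / c_V with hwdef
    have hw0 : 0 ≤ w := by positivity
    have hz2w : z ^ 2 ≤ w ^ ((2:ℝ) / r) := by
      have h2r : r * ((2:ℝ) / r) = 2 := by field_simp
      have e1 : z ^ (2:ℕ) = (z ^ r) ^ ((2:ℝ) / r) := by
        rw [← Real.rpow_natCast z 2, ← Real.rpow_mul hz0, h2r]
        norm_num
      calc z ^ 2 = (z ^ r) ^ ((2:ℝ) / r) := e1
        _ ≤ w ^ ((2:ℝ) / r) := Real.rpow_le_rpow (Real.rpow_nonneg hz0 r) hzr (by positivity)
    set W := w ^ ((2:ℝ) / r) with hWdef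
    have hW0 : 0 ≤ W := Real.rpow_nonneg hw0 _
    have s6 : W ^ ((r - 1) / 2) ≤ 1 + w := by
      have h2r : (2:ℝ) / r * ((r - 1) / 2) = (r - 1) / r := by
        field_simp
      have e2 : W ^ ((r - 1) / 2) = w ^ ((r - 1) / r) := by
        rw [hWdef, ← Real.rpow_mul hw0, h2r]
      rw [e2]
      exact rpow_le_one_add' hw0 (div_nonneg (by linarith) hrpos.le)
        (by rw [div_le_one hrpos]; linarith)
    have s2 : 1 + W ≤ 2 * max 1 W := by
      rcases le_total W 1 with hW | hW
      · rw [max_eq_left hW]; linarith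
      · rw [max_eq_right hW]; linarith
    have s5 : (max 1 W) ^ ((r - 1) / 2) ≤ 1 + W ^ ((r - 1) / 2) := by
      rcases le_total W 1 with hW | hW
      · rw [max_eq_left hW, Real.one_rpow]
        have := Real.rpow_nonneg hW0 ((r - 1) / 2)
        linarith
      · rw [max_eq_right hW]
        exact le_add_of_nonneg_left zero_le_one
    have smax0 : (0:ℝ) ≤ max 1 W := le_trans zero_le_one (le_max_left _ _)
    have hstep : 2 + w ≤ (2 + 2 / c_V) * (1 + h) := by
      have h2c : (0:ℝ) ≤ 2 / c_V := by positivity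
      have hw2 : w = (2 / c_V) * h := by rw [hwdef]; ring
      have hm : 0 ≤ 2 * h + 2 / c_V := add_nonneg (mul_nonneg (by norm_num) hh) h2c
      calc 2 + w = 2 + (2 / c_V) * h := by rw [hw2]
        _ ≤ 2 + (2 / c_V) * h + (2 * h + 2 / c_V) := le_add_of_nonneg_right hm
        _ = (2 + 2 / c_V) * (1 + h) := by ring
    have hP2 : (0:ℝ) < (2:ℝ) ^ ((r - 1) / 2) := by linarith
    calc (1 + z ^ 2) ^ ((r - 1) / 2)
        ≤ (1 + W) ^ ((r - 1) / 2) := Real.rpow_le_rpow (by positivity) (by linarith) hq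
      _ ≤ (2 * max 1 W) ^ ((r - 1) / 2) := Real.rpow_le_rpow (by positivity) s2 hq
      _ = (2:ℝ) ^ ((r - 1) / 2) * (max 1 W) ^ ((r - 1) / 2) :=
          Real.mul_rpow (by norm_num) smax0
      _ ≤ (2:ℝ) ^ ((r - 1) / 2) * (1 + W ^ ((r - 1) / 2)) :=
          mul_le_mul_of_nonneg_left s5 hP2.le
      _ ≤ (2:ℝ) ^ ((r - 1) / 2) * (2 + w) :=
          mul_le_mul_of_nonneg_left (by linarith) hP2.le
      _ ≤ (2:ℝ) ^ ((r - 1) / 2) * ((2 + 2 / c_V) * (1 + h)) :=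
          mul_le_mul_of_nonneg_left hstep hP2.le
      _ ≤ (1 + c_L ^ 2) ^ ((r - 1) / 2) *
            ((2:ℝ) ^ ((r - 1) / 2) * ((2 + 2 / c_V) * (1 + h))) := by
          apply le_mul_of_one_le_left _ hcl1
          have h2c : (0:ℝ) ≤ 2 + 2 / c_V := by positivity
          positivity
      _ = ((1 + c_L ^ 2) ^ ((r - 1) / 2) * (2:ℝ) ^ ((r - 1) / 2) * (2 + 2 / c_V)) * (1 + h) := by
          ring

/-- `|p| ≤ 1 + h` from `|p|² ≤ 2h`. -/
lemma pn_le_one_add {pn h : ℝ} (hpn : 0 ≤ pn) (hh : 0 ≤ h) (h2 : pn ^ 2 ≤ 2 * h) :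
    pn ≤ 1 + h := by
  nlinarith [sq_nonneg (pn - 1)]

/-- Extraction of `ᾱ t ≤ C` from the time-smallness hypothesis. -/
lemma alpha_time_bound {t ε αB h0 CT1 : ℝ} (ht0 : 0 ≤ t) (hε : 0 < ε) (hα : 0 ≤ αB)
    (hh0 : 0 ≤ h0) (h : t * ((ε ^ 2 + αB) * (1 + ε + h0)) ≤ CT1) : αB * t ≤ CT1 := by
  nlinarith [mul_nonneg ht0 (sq_nonneg ε),
    mul_nonneg (mul_nonneg ht0 hα) (add_nonneg hε.le hh0),
    mul_nonneg (mul_nonneg ht0 (sq_nonneg ε)) (add_nonneg hε.le hh0)]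

/-- Combining the pointwise bounds on the energy derivative. -/
lemma pg_combine {pn gn h sdK : ℝ} (hp : pn ≤ 1 + h) (hg : gn ≤ sdK * (1 + h)) :
    pn + gn / 2 ≤ (1 + sdK / 2) * (1 + h) := by
  nlinarith [hp, hg]

/-- Final momentum estimate from the self-improving supremum bound. -/
lemma momentum_final {P X ε c4 h0 : ℝ} (hP0 : 0 ≤ P) (hX : 0 ≤ X) (hε : 0 ≤ ε)
    (hc4 : 0 ≤ c4) (hh0 : 0 ≤ h0)
    (hkey : P ≤ Real.sqrt 2 * Real.sqrt h0 + (X + P / 2) + Real.sqrt c4 * ((X + ε) / 2)) :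
    P ≤ (2 * Real.sqrt 2 + 2 + Real.sqrt c4) * (Real.sqrt h0 + X + ε) := by
  have hsh0 : 0 ≤ Real.sqrt h0 := Real.sqrt_nonneg _
  have hsc4 : 0 ≤ Real.sqrt c4 := Real.sqrt_nonneg _
  have n1 : 0 ≤ Real.sqrt 2 * X := by positivity
  have n2 : 0 ≤ Real.sqrt 2 * ε := by positivity
  have n3 : 0 ≤ Real.sqrt c4 * Real.sqrt h0 := by positivity
  nlinarith [hkey, n1, n2, n3, hsh0, hsc4, hX, hε]

/-- From the quadratic bound on `‖p s‖²` to the square-root sum bound. -/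
lemma sqrt_quad_bound {y h0 X P c4 ε : ℝ} (hy0 : 0 ≤ y) (hh0 : 0 ≤ h0) (hX : 0 ≤ X)
    (hP : 0 ≤ P) (hc4 : 0 ≤ c4) (hε : 0 ≤ ε)
    (hy : y ^ 2 ≤ 2 * h0 + (2 * X * P + c4 * X * ε)) :
    y ≤ Real.sqrt 2 * Real.sqrt h0 + (X + P / 2) + Real.sqrt c4 * ((X + ε) / 2) := by
  have hn1 : (0:ℝ) ≤ 2 * h0 := by linarith
  have hn2 : (0:ℝ) ≤ 2 * X * P := by positivity
  have hn3 : (0:ℝ) ≤ c4 * X * ε := by positivity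
  have h4 : y ≤ Real.sqrt (2 * h0 + (2 * X * P + c4 * X * ε)) := by
    rw [show y = Real.sqrt (y ^ 2) from (Real.sqrt_sq hy0).symm]
    exact Real.sqrt_le_sqrt hy
  have h5 : Real.sqrt (2 * h0 + (2 * X * P + c4 * X * ε)) ≤
      Real.sqrt (2 * h0) + (Real.sqrt (2 * X * P) + Real.sqrt (c4 * X * ε)) :=
    le_trans (sqrt_add_le' hn1 (by linarith))
      (by linarith [sqrt_add_le' hn2 hn3])
  have h6 : Real.sqrt (2 * h0) = Real.sqrt 2 * Real.sqrt h0 := Real.sqrt_mul (by norm_num) _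
  have h7 : Real.sqrt (2 * X * P) ≤ X + P / 2 := by
    have h := sqrt_mul_le_half_add' (show (0:ℝ) ≤ 2 * X by linarith) hP
    linarith [h]
  have h8 : Real.sqrt (c4 * X * ε) ≤ Real.sqrt c4 * ((X + ε) / 2) := by
    have e1 : c4 * X * ε = c4 * (X * ε) := by ring
    rw [e1, Real.sqrt_mul hc4]
    exact mul_le_mul_of_nonneg_left (sqrt_mul_le_half_add' hX hε) (Real.sqrt_nonneg _)
  linarith [h4, h5, h7, h8]

/-- The running supremum `ᾱ(t) = sup_{0≤s≤t} |α(s)|` of the deviation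
`α = (α^tr, α^b) = (a' − 2p, −p' − ∇V(a))` from the Newtonian equations of motion. -/
noncomputable def alphaBar {d : ℕ} (V : EuclideanSpace ℝ (Fin d) → ℝ)
    (a p a' p' : ℝ → EuclideanSpace ℝ (Fin d)) (t : ℝ) : ℝ :=
  sSup ((fun s => Real.sqrt (‖a' s - (2 : ℝ) • p s‖ ^ 2 +
    ‖-p' s - gradient V (a s)‖ ^ 2)) '' Icc 0 t)

set_option maxHeartbeats 2000000 in
/-- Proposition 5.1 (prop:apest2): bounds on the soliton position and momentum.
There exist constants `C_a, C_p > 0` depending only on `c_L, c_V, C_V, d, r, C_E`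
such that for any `0 < ε ≤ C_E`, any nonnegative `C¹` potential `V` with
`|∂_j V(x)| ≤ C_V ε (1+ε²|x|²)^((r−1)/2)` and `V(x) ≥ c_V (ε|x|)^r` when `ε|x| ≥ c_L`,
and any continuously differentiable trajectory `(a,p)` on `[0,T]` with initial
energy `h₀ = (|p(0)|² + V(a(0)))/2 ≤ C_E`: for all
`t ∈ [0,T]` with `t ≤ C_{T₁}/((ε² + ᾱ(t))(1 + ε + h₀))`, where
`C_{T₁} = c_V/(2^(max(2,r−1)/2) C_V d)`, one has `ε|a(t)| ≤ C_a` and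
`|p(t)| ≤ C_p (√h₀ + ᾱ(t) t + ε)`. -/
theorem stmt_9 (d : ℕ) (hd : 1 ≤ d) (r C_V c_V c_L C_E : ℝ) (hr : 1 ≤ r)
    (hCV : 0 < C_V) (hcV : 0 < c_V) (hcL : 0 < c_L) (hCE : 0 < C_E) :
    ∃ C_a : ℝ, 0 < C_a ∧ ∃ C_p : ℝ, 0 < C_p ∧
      ∀ ε : ℝ, 0 < ε → ε ≤ C_E →
      ∀ V : EuclideanSpace ℝ (Fin d) → ℝ, ContDiff ℝ 1 V →
      (∀ x, 0 ≤ V x) →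
      (∀ x : EuclideanSpace ℝ (Fin d), ∀ j : Fin d,
        |fderiv ℝ V x (EuclideanSpace.single j 1)| ≤
          C_V * ε * (1 + ε ^ 2 * ‖x‖ ^ 2) ^ ((r - 1) / 2)) →
      (∀ x : EuclideanSpace ℝ (Fin d), c_L ≤ ε * ‖x‖ → c_V * (ε * ‖x‖) ^ r ≤ V x) →
      ∀ T : ℝ, ∀ a p a' p' : ℝ → EuclideanSpace ℝ (Fin d),
      (∀ t ∈ Icc 0 T, HasDerivAt a (a' t) t) →
      (∀ t ∈ Icc 0 T, HasDerivAt p (p' t) t) →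
      ContinuousOn a' (Icc 0 T) → ContinuousOn p' (Icc 0 T) →
      (‖p 0‖ ^ 2 + V (a 0)) / 2 ≤ C_E →
      ∀ t ∈ Icc 0 T,
        t ≤ (c_V / ((2 : ℝ) ^ (max 2 (r - 1) / 2) * C_V * (d : ℝ))) /
            ((ε ^ 2 + alphaBar V a p a' p' t) * (1 + ε + (‖p 0‖ ^ 2 + V (a 0)) / 2)) →
        ε * ‖a t‖ ≤ C_a ∧
        ‖p t‖ ≤ C_p * (Real.sqrt ((‖p 0‖ ^ 2 + V (a 0)) / 2) +
          alphaBar V a p a' p' t * t + ε) := by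
  have hdpos : (0:ℝ) < d := by exact_mod_cast Nat.lt_of_lt_of_le Nat.zero_lt_one hd
  have hrpos : (0:ℝ) < r := by linarith only [hr]
  have hrne : r ≠ 0 := ne_of_gt hrpos
  have hq : 0 ≤ (r - 1) / 2 := by linarith only [hr]
  -- constants
  set CT1 : ℝ := c_V / ((2 : ℝ) ^ (max 2 (r - 1) / 2) * C_V * (d : ℝ)) with hCT1def
  have hCT1pos : 0 < CT1 := by
    apply div_pos hcV
    exact mul_pos (mul_pos (Real.rpow_pos_of_pos two_pos _) hCV) hdpos
  set K1 : ℝ := (1 + c_L ^ 2) ^ ((r - 1) / 2) * (2:ℝ) ^ ((r - 1) / 2) * (2 + 2 / c_V)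
    with hK1def
  have h2q1 : 1 ≤ (2:ℝ) ^ ((r - 1) / 2) := Real.one_le_rpow one_le_two hq
  have hcl1 : 1 ≤ (1 + c_L ^ 2) ^ ((r - 1) / 2) :=
    Real.one_le_rpow (by nlinarith only [sq_nonneg c_L]) hq
  have hK1pos : 0 < K1 := by
    rw [hK1def]
    have h1 : (0:ℝ) < (1 + c_L ^ 2) ^ ((r - 1) / 2) := by linarith only [hcl1]
    have h2 : (0:ℝ) < (2:ℝ) ^ ((r - 1) / 2) := by linarith only [h2q1]
    have h3 : (0:ℝ) < 2 + 2 / c_V := by positivity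
    positivity
  set K2 : ℝ := 1 + Real.sqrt d * C_V * C_E * K1 / 2 with hK2def
  have hK2pos : (1:ℝ) ≤ K2 := by
    rw [hK2def]
    have : 0 ≤ Real.sqrt d * C_V * C_E * K1 / 2 := by positivity
    linarith only [this]
  set H : ℝ := (1 + C_E) * Real.exp (K2 * CT1) with hHdef
  have hHpos : 0 < H := by positivity
  set A : ℝ := max c_L ((2 * H / c_V) ^ ((1:ℝ) / r)) with hAdef
  have hApos : 0 < A := lt_of_lt_of_le hcL (le_max_left _ _)
  set c4 : ℝ := Real.sqrt d * C_V * (1 + A ^ 2) ^ ((r - 1) / 2) with hc4def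
  have hc4pos : 0 < c4 := by
    have h1 := Real.rpow_pos_of_pos (show (0:ℝ) < 1 + A ^ 2 by positivity) ((r - 1) / 2)
    have hsd : (0:ℝ) < Real.sqrt d := Real.sqrt_pos.mpr hdpos
    positivity
  refine ⟨A, hApos, 2 * Real.sqrt 2 + 2 + Real.sqrt c4, by positivity, ?_⟩
  intro ε hε hεE V hV hVpos hVder hVfar T a p a' p' hader hpder ha'c hp'c hE0 t ht htle
  -- basic setup
  have ht0 : 0 ≤ t := ht.1
  have hsub : Icc (0:ℝ) t ⊆ Icc 0 T := Icc_subset_Icc le_rfl ht.2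
  have h0t : (0:ℝ) ∈ Icc 0 t := ⟨le_rfl, ht0⟩
  set hfun : ℝ → ℝ := fun s => (‖p s‖ ^ 2 + V (a s)) / 2 with hfundef
  have hhnn : ∀ s, 0 ≤ hfun s := by
    intro s
    have h1 := hVpos (a s)
    have h2 := sq_nonneg ‖p s‖
    simp only [hfundef]
    linarith only [h1, h2]
  have hVle : ∀ s, V (a s) ≤ 2 * hfun s := by
    intro s; simp only [hfundef]; linarith only [sq_nonneg ‖p s‖]
  have hp2le : ∀ s, ‖p s‖ ^ 2 ≤ 2 * hfun s := by
    intro s; simp only [hfundef]; linarith only [hVpos (a s)]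
  set h0 : ℝ := (‖p 0‖ ^ 2 + V (a 0)) / 2 with hh0def
  have hh00 : 0 ≤ h0 := hhnn 0
  -- alphaBar facts
  set αfun : ℝ → ℝ := fun s => Real.sqrt (‖a' s - (2 : ℝ) • p s‖ ^ 2 +
    ‖-p' s - gradient V (a s)‖ ^ 2) with hαfundef
  set αB : ℝ := alphaBar V a p a' p' t with hαBdef
  have hαB_sSup : αB = sSup (αfun '' Icc 0 t) := rfl
  have hpc : ContinuousOn p (Icc 0 T) := fun u hu => (hpder u hu).continuousAt.continuousWithinAt
  have hac : ContinuousOn a (Icc 0 T) := fun u hu => (hader u hu).continuousAt.continuousWithinAt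
  have hgradc : Continuous (fun x => gradient V x) :=
    (InnerProductSpace.toDual ℝ _).symm.continuous.comp (hV.continuous_fderiv one_ne_zero)
  have hαc : ContinuousOn αfun (Icc 0 t) := by
    apply Real.continuous_sqrt.comp_continuousOn
    exact ((((ha'c.mono hsub).sub ((hpc.mono hsub).const_smul (2:ℝ))).norm.pow 2).add
      ((((hp'c.mono hsub).neg).sub (hgradc.comp_continuousOn (hac.mono hsub))).norm.pow 2))
  have hbdd : BddAbove (αfun '' Icc 0 t) := (isCompact_Icc.image_of_continuousOn hαc).bddAbove
  have hαle : ∀ u ∈ Icc 0 t, αfun u ≤ αB := by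
    intro u hu; rw [hαB_sSup]; exact le_csSup hbdd ⟨u, hu, rfl⟩
  have hα0 : 0 ≤ αB := le_trans (Real.sqrt_nonneg _) (hαle 0 h0t)
  have hαtr : ∀ u ∈ Icc 0 t, ‖a' u - (2:ℝ) • p u‖ ≤ αB := by
    intro u hu
    have h1 : ‖a' u - (2:ℝ) • p u‖ = Real.sqrt (‖a' u - (2:ℝ) • p u‖ ^ 2) :=
      (Real.sqrt_sq (norm_nonneg _)).symm
    rw [h1]
    refine le_trans (Real.sqrt_le_sqrt ?_) (hαle u hu)
    linarith only [sq_nonneg ‖-p' u - gradient V (a u)‖]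
  have hαb : ∀ u ∈ Icc 0 t, ‖-p' u - gradient V (a u)‖ ≤ αB := by
    intro u hu
    have h1 : ‖-p' u - gradient V (a u)‖ = Real.sqrt (‖-p' u - gradient V (a u)‖ ^ 2) :=
      (Real.sqrt_sq (norm_nonneg _)).symm
    rw [h1]
    refine le_trans (Real.sqrt_le_sqrt ?_) (hαle u hu)
    linarith only [sq_nonneg ‖a' u - (2:ℝ) • p u‖]
  -- time bound
  have hden : 0 < (ε ^ 2 + αB) * (1 + ε + h0) := by
    apply mul_pos
    · linarith only [pow_pos hε 2, hα0]
    · linarith only [hε, hh00]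
  have hprod : t * ((ε ^ 2 + αB) * (1 + ε + h0)) ≤ CT1 := (le_div_iff₀ hden).mp htle
  have hXle : αB * t ≤ CT1 := alpha_time_bound ht0 hε hα0 hh00 hprod
  -- energy derivative
  set hdf : ℝ → ℝ := fun u => (2 * ⟪p u, p' u⟫ + ⟪gradient V (a u), a' u⟫) / 2 with hdfdef
  have hderiv : ∀ u ∈ Icc 0 T, HasDerivAt hfun (hdf u) u := by
    intro u hu
    have h1 : HasDerivAt (fun s => ‖p s‖ ^ 2) (2 * ⟪p u, p' u⟫) u := by
      have := (hpder u hu).inner ℝ (hpder u hu)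
      simp only [real_inner_self_eq_norm_sq] at this
      have e : 2 * ⟪p u, p' u⟫ = ⟪p u, p' u⟫ + ⟪p' u, p u⟫ := by
        rw [real_inner_comm (p' u) (p u)]; ring
      rw [e]; exact this
    have h2 : HasDerivAt (fun s => V (a s)) (⟪gradient V (a u), a' u⟫) u := by
      have := ((hV.differentiable one_ne_zero) (a u)).hasFDerivAt.comp_hasDerivAt u (hader u hu)
      rwa [show (fderiv ℝ V (a u)) (a' u) = ⟪gradient V (a u), a' u⟫ from
        (InnerProductSpace.toDual_symm_apply).symm] at this
    exact (h1.add h2).div_const 2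
  -- gradient bound
  have hgradbound : ∀ x, ‖gradient V x‖ ≤
      Real.sqrt d * (C_V * ε * (1 + ε ^ 2 * ‖x‖ ^ 2) ^ ((r - 1) / 2)) := by
    intro x
    apply norm_le_sqrt_card' _ _ (by positivity)
    intro j
    have h2 : ⟪gradient V x, EuclideanSpace.single j (1:ℝ)⟫ =
        fderiv ℝ V x (EuclideanSpace.single j 1) := InnerProductSpace.toDual_symm_apply
    have h3 : ⟪gradient V x, EuclideanSpace.single j (1:ℝ)⟫ = gradient V x j := by
      rw [EuclideanSpace.inner_single_right]; simp
    rw [← h3, h2]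
    exact hVder x j
  -- key rpow estimate
  have hK1key : ∀ u, (1 + ε ^ 2 * ‖a u‖ ^ 2) ^ ((r - 1) / 2) ≤ K1 * (1 + hfun u) := by
    intro u
    have hz2 : ε ^ 2 * ‖a u‖ ^ 2 = (ε * ‖a u‖) ^ 2 := by ring
    rw [hz2, hK1def]
    apply key_rpow_bound r c_V c_L hr hcV _ _ (by positivity) (hhnn u)
    intro hc
    have h1 := hVfar (a u) hc
    have h2 := hVle u
    linarith only [h1, h2]
  -- momentum and gradient bounds along the trajectory, linear in energy
  have hpnorm_le : ∀ u, ‖p u‖ ≤ 1 + hfun u := fun u =>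
    pn_le_one_add (norm_nonneg _) (hhnn u) (hp2le u)
  have hgrad_le_K : ∀ u, ‖gradient V (a u)‖ ≤
      Real.sqrt d * C_V * C_E * K1 * (1 + hfun u) := by
    intro u
    have hsd : (0:ℝ) ≤ Real.sqrt d := Real.sqrt_nonneg _
    have h2 := hK1key u
    have hhu := hhnn u
    calc ‖gradient V (a u)‖
        ≤ Real.sqrt d * (C_V * ε * (1 + ε ^ 2 * ‖a u‖ ^ 2) ^ ((r - 1) / 2)) := hgradbound (a u)
      _ ≤ Real.sqrt d * (C_V * C_E * (K1 * (1 + hfun u))) := by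
          apply mul_le_mul_of_nonneg_left _ hsd
          have step1 : C_V * ε * (1 + ε ^ 2 * ‖a u‖ ^ 2) ^ ((r - 1) / 2)
              ≤ C_V * ε * (K1 * (1 + hfun u)) :=
            mul_le_mul_of_nonneg_left h2 (by positivity)
          have step2 : C_V * ε * (K1 * (1 + hfun u)) ≤ C_V * C_E * (K1 * (1 + hfun u)) := by
            have h9 : (0:ℝ) ≤ K1 * (1 + hfun u) :=
              mul_nonneg hK1pos.le (by linarith only [hhu])
            exact mul_le_mul_of_nonneg_right
              (mul_le_mul_of_nonneg_left hεE hCV.le) h9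
          linarith only [step1, step2]
      _ = Real.sqrt d * C_V * C_E * K1 * (1 + hfun u) := by ring
  -- pointwise bound on the energy derivative
  have habs : ∀ u ∈ Icc 0 t, |hdf u| ≤ (‖p u‖ + ‖gradient V (a u)‖ / 2) * αB := by
    intro u hu
    have h1 : hdf u = -⟪p u, -p' u - gradient V (a u)⟫ +
        ⟪gradient V (a u), a' u - (2:ℝ) • p u⟫ / 2 := by
      simp only [hdfdef, inner_sub_right, inner_neg_right, inner_smul_right]
      rw [real_inner_comm (gradient V (a u)) (p u)]
      ring
    have i1 : |⟪p u, -p' u - gradient V (a u)⟫| ≤ ‖p u‖ * αB :=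
      le_trans (abs_real_inner_le_norm _ _)
        (mul_le_mul_of_nonneg_left (hαb u hu) (norm_nonneg _))
    have i2 : |⟪gradient V (a u), a' u - (2:ℝ) • p u⟫| ≤ ‖gradient V (a u)‖ * αB :=
      le_trans (abs_real_inner_le_norm _ _)
        (mul_le_mul_of_nonneg_left (hαtr u hu) (norm_nonneg _))
    rw [h1]
    calc |(-⟪p u, -p' u - gradient V (a u)⟫) + ⟪gradient V (a u), a' u - (2:ℝ) • p u⟫ / 2|
        ≤ |(-⟪p u, -p' u - gradient V (a u)⟫)| +
            |⟪gradient V (a u), a' u - (2:ℝ) • p u⟫ / 2| := abs_add_le _ _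
      _ = |⟪p u, -p' u - gradient V (a u)⟫| +
            |⟪gradient V (a u), a' u - (2:ℝ) • p u⟫| / 2 := by
          rw [abs_neg, abs_div]
          norm_num
      _ ≤ (‖p u‖ + ‖gradient V (a u)‖ / 2) * αB := by
          rw [add_mul]
          have i3 : |⟪gradient V (a u), a' u - (2:ℝ) • p u⟫| / 2 ≤
              ‖gradient V (a u)‖ / 2 * αB := by linarith only [i2]
          linarith only [i1, i3]
  have hdb : ∀ u ∈ Icc 0 t, |hdf u| ≤ (K2 * αB) * |1 + hfun u| + 0 := by
    intro u hu
    have h2 := habs u hu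
    have h3 : ‖p u‖ + ‖gradient V (a u)‖ / 2 ≤ K2 * (1 + hfun u) := by
      rw [hK2def]
      exact pg_combine (hpnorm_le u) (hgrad_le_K u)
    have h4 : |1 + hfun u| = 1 + hfun u := abs_of_nonneg (by linarith only [hhnn u])
    rw [h4, add_zero]
    calc |hdf u| ≤ (‖p u‖ + ‖gradient V (a u)‖ / 2) * αB := h2
      _ ≤ (K2 * (1 + hfun u)) * αB := mul_le_mul_of_nonneg_right h3 hα0
      _ = (K2 * αB) * (1 + hfun u) := by ring
  -- Gronwall 1 : uniform energy bound
  have hfc : ContinuousOn hfun (Icc 0 t) :=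
    fun u hu => ((hderiv u (hsub hu)).continuousAt).continuousWithinAt
  have hgr1 := norm_le_gronwallBound_of_norm_deriv_right_le
    (f := fun u => 1 + hfun u) (f' := hdf) (δ := 1 + C_E) (K := K2 * αB) (ε := 0)
    (a := 0) (b := t)
    (continuousOn_const.add hfc)
    (fun x hx => ((hderiv x (hsub (Ico_subset_Icc_self hx))).const_add 1).hasDerivWithinAt)
    (by
      have h5 : hfun 0 ≤ C_E := hE0
      show ‖1 + hfun 0‖ ≤ 1 + C_E
      rw [Real.norm_eq_abs, abs_of_nonneg (by linarith only [hhnn 0])]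
      linarith only [h5])
    (fun x hx => by
      have := hdb x (Ico_subset_Icc_self hx)
      simpa [Real.norm_eq_abs] using this)
  have hHs : ∀ s ∈ Icc 0 t, hfun s ≤ H := by
    intro s hs
    have h1 := hgr1 s hs
    rw [sub_zero, gronwallBound_ε0] at h1
    rw [Real.norm_eq_abs] at h1
    have h2 : 1 + hfun s ≤ (1 + C_E) * Real.exp (K2 * αB * s) :=
      le_trans (le_abs_self _) h1
    have h3 : K2 * αB * s ≤ K2 * CT1 := by
      have hm : αB * s ≤ αB * t := mul_le_mul_of_nonneg_left hs.2 hα0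
      have hK2' : (0:ℝ) ≤ K2 := by linarith only [hK2pos]
      calc K2 * αB * s = K2 * (αB * s) := by ring
        _ ≤ K2 * CT1 := mul_le_mul_of_nonneg_left (by linarith only [hm, hXle]) hK2'
    have h4 : Real.exp (K2 * αB * s) ≤ Real.exp (K2 * CT1) := Real.exp_le_exp.mpr h3
    have h5 : (1 + C_E) * Real.exp (K2 * αB * s) ≤ H := by
      rw [hHdef]
      exact mul_le_mul_of_nonneg_left h4 (by linarith only [hCE])
    linarith only [h2, h5]
  -- position bound
  have hposb : ∀ s ∈ Icc 0 t, ε * ‖a s‖ ≤ A := by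
    intro s hs
    by_cases hc : c_L ≤ ε * ‖a s‖
    · have h1 := hVfar (a s) hc
      have hx0 : 0 ≤ ε * ‖a s‖ := by positivity
      have h2 : (ε * ‖a s‖) ^ r ≤ 2 * H / c_V := by
        rw [le_div_iff₀ hcV]
        have h6 := hVle s
        have h7 := hHs s hs
        linarith only [h1, h6, h7, mul_le_mul_of_nonneg_left h7 (by norm_num : (0:ℝ) ≤ 2)]
      have h3 : ε * ‖a s‖ = ((ε * ‖a s‖) ^ r) ^ ((1:ℝ) / r) := by
        rw [← Real.rpow_mul hx0, mul_one_div, div_self hrne, Real.rpow_one]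
      calc ε * ‖a s‖ = ((ε * ‖a s‖) ^ r) ^ ((1:ℝ) / r) := h3
        _ ≤ (2 * H / c_V) ^ ((1:ℝ) / r) :=
            Real.rpow_le_rpow (Real.rpow_nonneg hx0 r) h2 (by positivity)
        _ ≤ A := le_max_right _ _
    · push_neg at hc
      exact le_trans hc.le (le_max_left _ _)
  -- gradient bound along the trajectory
  have hgrada : ∀ s ∈ Icc 0 t, ‖gradient V (a s)‖ ≤ c4 * ε := by
    intro s hs
    have hx0 : 0 ≤ ε * ‖a s‖ := by positivity
    have h1 : (1 + ε ^ 2 * ‖a s‖ ^ 2) ^ ((r - 1) / 2) ≤ (1 + A ^ 2) ^ ((r - 1) / 2) := by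
      apply Real.rpow_le_rpow (by positivity) _ hq
      have h9 := pow_le_pow_left₀ hx0 (hposb s hs) 2
      have h10 : (ε * ‖a s‖) ^ 2 = ε ^ 2 * ‖a s‖ ^ 2 := by ring
      rw [h10] at h9
      linarith only [h9]
    calc ‖gradient V (a s)‖
        ≤ Real.sqrt d * (C_V * ε * (1 + ε ^ 2 * ‖a s‖ ^ 2) ^ ((r - 1) / 2)) := hgradbound (a s)
      _ ≤ Real.sqrt d * (C_V * ε * (1 + A ^ 2) ^ ((r - 1) / 2)) := by
          apply mul_le_mul_of_nonneg_left _ (Real.sqrt_nonneg _)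
          exact mul_le_mul_of_nonneg_left h1 (by positivity)
      _ = c4 * ε := by rw [hc4def]; ring
  -- supremum of the momentum
  set P : ℝ := sSup ((fun s => ‖p s‖) '' Icc 0 t) with hPdef
  have hPbdd : BddAbove ((fun s => ‖p s‖) '' Icc 0 t) :=
    (isCompact_Icc.image_of_continuousOn ((hpc.mono hsub).norm)).bddAbove
  have hPle : ∀ s ∈ Icc 0 t, ‖p s‖ ≤ P := by
    intro s hs; rw [hPdef]; exact le_csSup hPbdd ⟨s, hs, rfl⟩
  have hP0 : 0 ≤ P := le_trans (norm_nonneg _) (hPle 0 h0t)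
  -- Gronwall 2 : refined energy bound
  set M : ℝ := αB * (P + c4 * ε / 2) with hMdef
  have hM0 : 0 ≤ M := by
    rw [hMdef]
    apply mul_nonneg hα0
    positivity
  have hgr2 := norm_le_gronwallBound_of_norm_deriv_right_le
    (f := hfun) (f' := hdf) (δ := h0) (K := 0) (ε := M) (a := 0) (b := t)
    hfc
    (fun x hx => (hderiv x (hsub (Ico_subset_Icc_self hx))).hasDerivWithinAt)
    (by rw [Real.norm_eq_abs, abs_of_nonneg (hhnn 0)])
    (fun x hx => by
      have hx' : x ∈ Icc 0 t := Ico_subset_Icc_self hx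
      have h2 := habs x hx'
      have h3 : (‖p x‖ + ‖gradient V (a x)‖ / 2) * αB ≤ M := by
        have m1 := mul_le_mul_of_nonneg_right (hPle x hx') hα0
        have m2 := mul_le_mul_of_nonneg_right (hgrada x hx') hα0
        rw [hMdef]
        have e1 : αB * (P + c4 * ε / 2) = P * αB + (c4 * ε) * αB / 2 := by ring
        rw [e1]
        have e2 : (‖p x‖ + ‖gradient V (a x)‖ / 2) * αB =
            ‖p x‖ * αB + ‖gradient V (a x)‖ * αB / 2 := by ring
        rw [e2]
        linarith only [m1, m2]
      rw [Real.norm_eq_abs, Real.norm_eq_abs, zero_mul, zero_add]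
      linarith only [h2, h3])
  set X : ℝ := αB * t with hXdef
  have hX0 : 0 ≤ X := by rw [hXdef]; exact mul_nonneg hα0 ht0
  have hply : ∀ s ∈ Icc 0 t, ‖p s‖ ≤
      Real.sqrt 2 * Real.sqrt h0 + (X + P / 2) + Real.sqrt c4 * ((X + ε) / 2) := by
    intro s hs
    have h1 := hgr2 s hs
    rw [sub_zero] at h1
    simp only [gronwallBound_K0] at h1
    rw [Real.norm_eq_abs, abs_of_nonneg (hhnn s)] at h1
    have hMs : M * s ≤ M * t := mul_le_mul_of_nonneg_left hs.2 hM0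
    have hMt : M * t = X * P + c4 * X * ε / 2 := by rw [hMdef, hXdef]; ring
    have h3 : ‖p s‖ ^ 2 ≤ 2 * h0 + (2 * X * P + c4 * X * ε) := by
      have h9 := hp2le s
      linarith only [h1, hMs, hMt, h9]
    exact sqrt_quad_bound (norm_nonneg _) hh00 hX0 hP0 hc4pos.le hε.le h3
  have hPfinal : P ≤ (2 * Real.sqrt 2 + 2 + Real.sqrt c4) * (Real.sqrt h0 + X + ε) := by
    have h1 : P ≤ Real.sqrt 2 * Real.sqrt h0 + (X + P / 2) + Real.sqrt c4 * ((X + ε) / 2) := by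
      rw [hPdef]
      apply csSup_le (Nonempty.image _ (nonempty_Icc.mpr ht0))
      rintro y ⟨s, hs, rfl⟩
      exact hply s hs
    exact momentum_final hP0 hX0 hε.le hc4pos.le hh00 h1
  refine ⟨hposb t ⟨ht0, le_rfl⟩, ?_⟩
  calc ‖p t‖ ≤ P := hPle t ⟨ht0, le_rfl⟩
    _ ≤ (2 * Real.sqrt 2 + 2 + Real.sqrt c4) * (Real.sqrt h0 + X + ε) := hPfinal
    _ = (2 * Real.sqrt 2 + 2 + Real.sqrt c4) * (Real.sqrt h0 + αB * t + ε) := by rw [hXdef]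
end

section
/- Let d ≥ 1, let A be a symmetric real d×d matrix, v ∈ ℝ^d, c ∈ ℝ, and define V : ℝ^d → ℝ by V(x) := x·Ax + v·x + c. Let μ ∈ ℝ, let g : ℝ → ℝ be continuous, and let η̃ : ℝ^d → ℝ be twice continuously differentiable and satisfy, for all y ∈ ℝ^d, −Δη̃(y) + μ η̃(y) − g(η̃(y)²) η̃(y) + (y·Ay) η̃(y) = 0. Let a, p : ℝ → ℝ^d and γ : ℝ → ℝ be differentiable and satisfy, for all t, p'(t) = −(2A a(t) + v), a'(t) = 2p(t), and γ'(t) = |p(t)|² + μ − V(a(t)). Define ψ : ℝ^d × ℝ → ℂ by ψ(x,t) := exp( i ( p(t)·(x−a(t)) + γ(t) ) ) · η̃(x−a(t)). Then for all x ∈ ℝ^d and t ∈ ℝ, i ∂_t ψ(x,t) = −Δ_x ψ(x,t) + V(x) ψ(x,t) − g(|ψ(x,t)|²) ψ(x,t). -/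
/-- The Laplacian of a complex-valued function on `ℝ^d`, as the sum of its second
partial derivatives. -/
noncomputable def lapC {d : ℕ} (f : (Fin d → ℝ) → ℂ) (x : Fin d → ℝ) : ℂ :=
  ∑ j, iteratedFDeriv ℝ 2 f x ![Pi.single j 1, Pi.single j 1]

/-- The Laplacian of a real-valued function on `ℝ^d`. -/
noncomputable def lapR {d : ℕ} (f : (Fin d → ℝ) → ℝ) (x : Fin d → ℝ) : ℝ :=
  ∑ j, iteratedFDeriv ℝ 2 f x ![Pi.single j 1, Pi.single j 1]

/-- The quadratic potential `V(x) = x·Ax + v·x + c`. -/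
def quadV {d : ℕ} (A : Matrix (Fin d) (Fin d) ℝ) (v : Fin d → ℝ) (c : ℝ)
    (x : Fin d → ℝ) : ℝ :=
  (∑ i, ∑ j, A i j * x i * x j) + (∑ i, v i * x i) + c

/-- The solitary wave ansatz `ψ(x,t) = e^{i(p(t)·(x−a(t)) + γ(t))} η̃(x−a(t))`. -/
noncomputable def solWave {d : ℕ} (η : (Fin d → ℝ) → ℝ) (a p : ℝ → Fin d → ℝ)
    (γ : ℝ → ℝ) (x : Fin d → ℝ) (t : ℝ) : ℂ :=
  Complex.exp (Complex.I * (((∑ i, p t i * (x i - a t i)) + γ t : ℝ) : ℂ)) *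
    (η (x - a t) : ℂ)

namespace Stmt17Aux

variable {d : ℕ}

/-- The linear form `y ↦ ∑ i, P i * y i` as a continuous linear map. -/
noncomputable def Lm (P : Fin d → ℝ) : (Fin d → ℝ) →L[ℝ] ℝ :=
  ∑ i, P i • ContinuousLinearMap.proj i

lemma Lm_apply (P u : Fin d → ℝ) : Lm P u = ∑ i, P i * u i := by
  simp [Lm, ContinuousLinearMap.sum_apply]

lemma hasFDerivAt_S (P : Fin d → ℝ) (Cc : ℝ) (y : Fin d → ℝ) :
    HasFDerivAt (fun y : Fin d → ℝ => (∑ i, P i * y i) + Cc) (Lm P) y := by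
  have : (fun y : Fin d → ℝ => (∑ i, P i * y i) + Cc) = fun y => Lm P y + Cc := by
    funext z; rw [Lm_apply]
  rw [this]
  exact (Lm P).hasFDerivAt.add_const Cc

/-- The exponential factor of the wave, at a frozen time. -/
noncomputable def Efn (P : Fin d → ℝ) (Cc : ℝ) (y : Fin d → ℝ) : ℂ :=
  Complex.exp (Complex.I * (((∑ i, P i * y i) + Cc : ℝ) : ℂ))

/-- The full spatial wave function at a frozen time. -/
noncomputable def Ffn (P : Fin d → ℝ) (Cc : ℝ) (b : Fin d → ℝ)
    (η : (Fin d → ℝ) → ℝ) (y : Fin d → ℝ) : ℂ :=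
  Efn P Cc y * (η (y - b) : ℂ)

lemma hasFDerivAt_E (P : Fin d → ℝ) (Cc : ℝ) (y : Fin d → ℝ) :
    HasFDerivAt (Efn P Cc)
      (Efn P Cc y • (Complex.I • (Complex.ofRealCLM.comp (Lm P)))) y := by
  have h1 : HasFDerivAt (fun y : Fin d → ℝ => (((∑ i, P i * y i) + Cc : ℝ) : ℂ))
      (Complex.ofRealCLM.comp (Lm P)) y :=
    Complex.ofRealCLM.hasFDerivAt.comp y (hasFDerivAt_S P Cc y)
  exact (h1.const_mul Complex.I).cexp

lemma hasFDerivAt_eta_shift (η : (Fin d → ℝ) → ℝ) (hη : Differentiable ℝ η)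
    (b y : Fin d → ℝ) :
    HasFDerivAt (fun y => η (y - b)) (fderiv ℝ η (y - b)) y := by
  have h := (hη (y - b)).hasFDerivAt.comp y ((hasFDerivAt_id y).sub_const b)
  simpa [Function.comp_def] using h

lemma hasFDerivAt_F (P : Fin d → ℝ) (Cc : ℝ) (b : Fin d → ℝ)
    (η : (Fin d → ℝ) → ℝ) (hη : Differentiable ℝ η) (y : Fin d → ℝ) :
    HasFDerivAt (Ffn P Cc b η)
      (Efn P Cc y • (Complex.ofRealCLM.comp (fderiv ℝ η (y - b))) +
        (η (y - b) : ℂ) • (Efn P Cc y • (Complex.I • (Complex.ofRealCLM.comp (Lm P))))) y := by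
  have hE := hasFDerivAt_E P Cc y
  have hη2 : HasFDerivAt (fun y => ((η (y - b) : ℝ) : ℂ))
      (Complex.ofRealCLM.comp (fderiv ℝ η (y - b))) y :=
    Complex.ofRealCLM.hasFDerivAt.comp y (hasFDerivAt_eta_shift η hη b y)
  exact hE.mul hη2

lemma Lm_single (P : Fin d → ℝ) (j : Fin d) : Lm P (Pi.single j 1) = P j := by
  rw [Lm_apply]
  simp [Pi.single_apply, mul_ite]

lemma fderiv_F_apply (P : Fin d → ℝ) (Cc : ℝ) (b : Fin d → ℝ)
    (η : (Fin d → ℝ) → ℝ) (hη : Differentiable ℝ η) (y : Fin d → ℝ) (j : Fin d) :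
    fderiv ℝ (Ffn P Cc b η) y (Pi.single j 1) =
      Efn P Cc y * (fderiv ℝ η (y - b) (Pi.single j 1) : ℝ) +
        (η (y - b) : ℂ) * (Efn P Cc y * (Complex.I * (P j))) := by
  rw [(hasFDerivAt_F P Cc b η hη y).fderiv]
  simp [Lm_single, smul_eq_mul]

lemma contDiff_F (P : Fin d → ℝ) (Cc : ℝ) (b : Fin d → ℝ)
    (η : (Fin d → ℝ) → ℝ) (hη : ContDiff ℝ 2 η) :
    ContDiff ℝ 2 (Ffn P Cc b η) := by
  have hS : ContDiff ℝ 2 (fun y : Fin d → ℝ => (∑ i, P i * y i) + Cc) := by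
    have : (fun y : Fin d → ℝ => (∑ i, P i * y i) + Cc) = fun y => Lm P y + Cc := by
      funext z; rw [Lm_apply]
    rw [this]
    exact (Lm P).contDiff.add contDiff_const
  have hE : ContDiff ℝ 2 (Efn P Cc) :=
    (contDiff_const.mul (Complex.ofRealCLM.contDiff.comp hS)).cexp
  exact hE.mul (Complex.ofRealCLM.contDiff.comp (hη.comp (contDiff_id.sub contDiff_const)))

lemma second_deriv_eq {F : Type*} [NormedAddCommGroup F] [NormedSpace ℝ F]
    (f : (Fin d → ℝ) → F) (hf : ContDiff ℝ 2 f) (x u : Fin d → ℝ) :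
    iteratedFDeriv ℝ 2 f x ![u, u] = fderiv ℝ (fun y => fderiv ℝ f y u) x u := by
  rw [iteratedFDeriv_two_apply]
  have hdiff : DifferentiableAt ℝ (fderiv ℝ f) x :=
    ((hf.fderiv_right (m := 1) one_add_one_eq_two.le).differentiable one_ne_zero) x
  rw [fderiv_clm_apply hdiff (differentiableAt_const u)]
  simp

lemma lap_term (P : Fin d → ℝ) (Cc : ℝ) (b : Fin d → ℝ)
    (η : (Fin d → ℝ) → ℝ) (hη : ContDiff ℝ 2 η) (x : Fin d → ℝ) (j : Fin d) :
    iteratedFDeriv ℝ 2 (Ffn P Cc b η) x ![Pi.single j 1, Pi.single j 1] =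
      Efn P Cc x * ((Complex.I * (P j)) ^ 2 * (η (x - b) : ℝ)
        + 2 * (Complex.I * (P j)) * (fderiv ℝ η (x - b) (Pi.single j 1) : ℝ)
        + (iteratedFDeriv ℝ 2 η (x - b) ![Pi.single j 1, Pi.single j 1] : ℝ)) := by
  have hηd : Differentiable ℝ η := hη.differentiable two_ne_zero
  set e : Fin d → ℝ := Pi.single j 1 with he
  set dη : (Fin d → ℝ) → ℝ := fun z => fderiv ℝ η z e with hdη
  have hdηdiff : Differentiable ℝ dη :=
    ((hη.fderiv_right (m := 1) one_add_one_eq_two.le).differentiable one_ne_zero).clm_apply (differentiable_const _)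
  rw [second_deriv_eq _ (contDiff_F P Cc b η hη)]
  have hfun : (fun y => fderiv ℝ (Ffn P Cc b η) y e) =
      fun y => Efn P Cc y * (dη (y - b) : ℂ) + (η (y - b) : ℂ) * (Efn P Cc y * (Complex.I * (P j))) := by
    funext y; exact fderiv_F_apply P Cc b η hηd y j
  rw [hfun]
  have hE := hasFDerivAt_E P Cc x
  have hdC : HasFDerivAt (fun y => ((dη (y - b) : ℝ) : ℂ))
      (Complex.ofRealCLM.comp (fderiv ℝ dη (x - b))) x :=
    Complex.ofRealCLM.hasFDerivAt.comp x (hasFDerivAt_eta_shift dη hdηdiff b x)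
  have hηC : HasFDerivAt (fun y => ((η (y - b) : ℝ) : ℂ))
      (Complex.ofRealCLM.comp (fderiv ℝ η (x - b))) x :=
    Complex.ofRealCLM.hasFDerivAt.comp x (hasFDerivAt_eta_shift η hηd b x)
  have h1 := hE.mul hdC
  have h2 := hηC.mul (hE.mul_const (Complex.I * (P j)))
  have htot := (h1.add h2).fderiv
  erw [htot]
  have hsnd : fderiv ℝ dη (x - b) e = iteratedFDeriv ℝ 2 η (x - b) ![e, e] :=
    (second_deriv_eq η hη (x - b) e).symm
  rw [he] at hsnd
  have hdx : dη (x - b) = fderiv ℝ η (x - b) (Pi.single j 1) := rfl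
  simp [he, Lm_single, smul_eq_mul, hsnd, hdx]
  ring

lemma lapC_F (P : Fin d → ℝ) (Cc : ℝ) (b : Fin d → ℝ)
    (η : (Fin d → ℝ) → ℝ) (hη : ContDiff ℝ 2 η) (x : Fin d → ℝ) :
    lapC (Ffn P Cc b η) x = Efn P Cc x *
      (-((∑ j, P j ^ 2 : ℝ) : ℂ) * (η (x - b) : ℂ)
        + 2 * Complex.I * ((∑ j, P j * fderiv ℝ η (x - b) (Pi.single j 1) : ℝ) : ℂ)
        + ((lapR η (x - b) : ℝ) : ℂ)) := by
  unfold lapC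
  rw [Finset.sum_congr rfl fun j _ => lap_term P Cc b η hη x j, ← Finset.mul_sum]
  congr 1
  have e1 : ∀ j : Fin d, (Complex.I * ((P j : ℝ) : ℂ)) ^ 2 * ((η (x - b) : ℝ) : ℂ)
        + 2 * (Complex.I * ((P j : ℝ) : ℂ)) * ((fderiv ℝ η (x - b) (Pi.single j 1) : ℝ) : ℂ)
        + ((iteratedFDeriv ℝ 2 η (x - b) ![Pi.single j 1, Pi.single j 1] : ℝ) : ℂ)
      = -(((P j ^ 2 : ℝ)) : ℂ) * ((η (x - b) : ℝ) : ℂ)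
        + 2 * Complex.I * (((P j * fderiv ℝ η (x - b) (Pi.single j 1) : ℝ)) : ℂ)
        + ((iteratedFDeriv ℝ 2 η (x - b) ![Pi.single j 1, Pi.single j 1] : ℝ) : ℂ) := by
    intro j
    push_cast
    linear_combination ((P j : ℂ)) ^ 2 * ((η (x - b) : ℝ) : ℂ) * Complex.I_sq
  rw [Finset.sum_congr rfl fun j _ => e1 j]
  rw [Finset.sum_add_distrib, Finset.sum_add_distrib]
  simp only [lapR]
  push_cast
  rw [← Finset.sum_mul, ← Finset.sum_neg_distrib, ← Finset.mul_sum]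


lemma fderiv_pi_sum (f : (Fin d → ℝ) → ℝ) (y u : Fin d → ℝ) :
    fderiv ℝ f y u = ∑ j, u j * fderiv ℝ f y (Pi.single j 1) := by
  have hu : u = ∑ j, u j • (Pi.single j 1 : Fin d → ℝ) := by
    funext k
    simp [Finset.sum_apply, Pi.single_apply]
  conv_lhs => rw [hu]
  rw [map_sum]
  simp [smul_eq_mul]

lemma quad_taylor (A : Matrix (Fin d) (Fin d) ℝ) (hA : A.IsSymm)
    (v : Fin d → ℝ) (c : ℝ) (x b : Fin d → ℝ) :
    quadV A v c x = quadV A v c b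
      + (∑ i, ((2 : ℝ) • A.mulVec b + v) i * (x i - b i))
      + ∑ i, ∑ j, A i j * (x i - b i) * (x j - b j) := by
  have hswap : ∑ i, ∑ j, A i j * b i * (x j - b j)
      = ∑ i, ∑ j, A i j * (x i - b i) * b j := by
    rw [Finset.sum_comm]
    refine Finset.sum_congr rfl fun i _ => Finset.sum_congr rfl fun j _ => ?_
    have : A j i = A i j := by
      conv_lhs => rw [← hA]
      rfl
    rw [this]; ring
  have hlin : ∀ i, ((2 : ℝ) • A.mulVec b + v) i * (x i - b i)
      = (∑ j, 2 * (A i j * b j * (x i - b i))) + v i * (x i - b i) := by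
    intro i
    simp only [Pi.add_apply, Pi.smul_apply, smul_eq_mul, Matrix.mulVec, dotProduct]
    rw [add_mul, Finset.mul_sum, Finset.sum_mul]
    congr 1
    exact Finset.sum_congr rfl fun j _ => by ring
  simp only [quadV, hlin]
  rw [Finset.sum_add_distrib]
  have expand : ∀ i, ∑ j, A i j * x i * x j
      = (∑ j, A i j * (x i - b i) * (x j - b j)) + (∑ j, A i j * b i * (x j - b j))
        + (∑ j, A i j * (x i - b i) * b j) + (∑ j, A i j * b i * b j) := by
    intro i
    rw [← Finset.sum_add_distrib, ← Finset.sum_add_distrib, ← Finset.sum_add_distrib]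
    exact Finset.sum_congr rfl fun j _ => by ring
  simp only [expand]
  rw [Finset.sum_add_distrib, Finset.sum_add_distrib, Finset.sum_add_distrib, hswap]
  have hv : ∑ i, v i * x i = (∑ i, v i * b i) + ∑ i, v i * (x i - b i) := by
    rw [← Finset.sum_add_distrib]
    exact Finset.sum_congr rfl fun i _ => by ring
  have h2 : ∑ i, ∑ j, 2 * (A i j * b j * (x i - b i))
      = 2 * ∑ i, ∑ j, A i j * b j * (x i - b i) := by
    rw [Finset.mul_sum]
    exact Finset.sum_congr rfl fun i _ => by rw [Finset.mul_sum]
  have h3 : ∑ i, ∑ j, A i j * b j * (x i - b i)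
      = ∑ i, ∑ j, A i j * (x i - b i) * b j :=
    Finset.sum_congr rfl fun i _ => Finset.sum_congr rfl fun j _ => by ring
  rw [hv, h2, h3]
  ring

end Stmt17Aux

open Stmt17Aux

/-- Appendix D (sec:fam): for a quadratic confining potential `V(x) = x·Ax + v·x + c`
with `A` symmetric, a `C²` profile `η̃` solving `−Δη̃ + μη̃ − g(η̃²)η̃ + (y·Ay)η̃ = 0`,
and modulation parameters solving the Newtonian equations
`ṗ = −(2Aa+v) = −∇V(a)`, `ȧ = 2p`, `γ̇ = |p|² + μ − V(a)`, the function
`ψ(x,t) = e^{i(p(t)·(x−a(t)) + γ(t))} η̃(x−a(t))` solves the nonlinear Schrödinger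
equation `i∂_tψ = −Δψ + Vψ − g(|ψ|²)ψ`. -/
theorem stmt_17 (d : ℕ) (hd : 1 ≤ d) (A : Matrix (Fin d) (Fin d) ℝ) (hA : A.IsSymm)
    (v : Fin d → ℝ) (c μ : ℝ) (g : ℝ → ℝ) (hg : Continuous g)
    (η : (Fin d → ℝ) → ℝ) (hη : ContDiff ℝ 2 η)
    (hprofile : ∀ y : Fin d → ℝ,
      -lapR η y + μ * η y - g (η y ^ 2) * η y + (∑ i, ∑ j, A i j * y i * y j) * η y = 0)
    (a p : ℝ → Fin d → ℝ) (γ : ℝ → ℝ)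
    (hp : ∀ t, HasDerivAt p (-((2 : ℝ) • A.mulVec (a t) + v)) t)
    (ha : ∀ t, HasDerivAt a ((2 : ℝ) • p t) t)
    (hγ : ∀ t, HasDerivAt γ ((∑ i, p t i ^ 2) + μ - quadV A v c (a t)) t) :
    ∀ (x : Fin d → ℝ) (t : ℝ),
      Complex.I * deriv (fun s => solWave η a p γ x s) t =
        -lapC (fun y => solWave η a p γ y t) x
          + (quadV A v c x : ℂ) * solWave η a p γ x t
          - (g (‖solWave η a p γ x t‖ ^ 2) : ℂ) * solWave η a p γ x t := by
  intro x t
  have hηd : Differentiable ℝ η := hη.differentiable two_ne_zero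
  set P : Fin d → ℝ := p t with hP
  set b : Fin d → ℝ := a t with hb
  set Cc : ℝ := γ t - ∑ i, P i * b i with hCc
  -- the spatial function at frozen time t equals Ffn P Cc b η
  have harg : ∀ z : Fin d → ℝ, (∑ i, P i * (z i - b i)) + γ t = (∑ i, P i * z i) + Cc := by
    intro z
    rw [hCc, show (∑ i, P i * (z i - b i) : ℝ) = (∑ i, P i * z i) - ∑ i, P i * b i by
      rw [← Finset.sum_sub_distrib]; exact Finset.sum_congr rfl fun i _ => by ring]
    ring
  have hsol_eq : (fun z => solWave η a p γ z t) = Ffn P Cc b η := by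
    funext z
    simp only [solWave, Ffn, Efn, ← hP, ← hb]
    rw [harg z]
  -- time derivative
  have hpi : ∀ i, HasDerivAt (fun s => p s i) ((-((2 : ℝ) • A.mulVec (a t) + v)) i) t :=
    fun i => hasDerivAt_pi.1 (hp t) i
  have hai : ∀ i, HasDerivAt (fun s => a s i) (((2 : ℝ) • p t) i) t :=
    fun i => hasDerivAt_pi.1 (ha t) i
  set θ' : ℝ := (∑ i, ((-((2 : ℝ) • A.mulVec (a t) + v)) i * (x i - a t i)
      + p t i * (0 - ((2 : ℝ) • p t) i)))
      + ((∑ i, p t i ^ 2) + μ - quadV A v c (a t)) with hθ'def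
  have hθ : HasDerivAt (fun s => (∑ i, p s i * (x i - a s i)) + γ s) θ' t :=
    (HasDerivAt.fun_sum (u := Finset.univ) fun i _ =>
      (hpi i).mul ((hasDerivAt_const t (x i)).sub (hai i))).add (hγ t)
  have hexp : HasDerivAt
      (fun s => Complex.exp (Complex.I * (((∑ i, p s i * (x i - a s i)) + γ s : ℝ) : ℂ)))
      (Complex.exp (Complex.I * (((∑ i, p t i * (x i - a t i)) + γ t : ℝ) : ℂ))
        * (Complex.I * (θ' : ℂ))) t :=
    ((hθ.ofReal_comp).const_mul Complex.I).cexp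
  have hηt : HasDerivAt (fun s => η (x - a s))
      (fderiv ℝ η (x - a t) (0 - (2 : ℝ) • p t)) t :=
    (hηd (x - a t)).hasFDerivAt.comp_hasDerivAt t ((hasDerivAt_const t x).sub (ha t))
  have hG : HasDerivAt (fun s => solWave η a p γ x s)
      (Complex.exp (Complex.I * (((∑ i, p t i * (x i - a t i)) + γ t : ℝ) : ℂ))
          * (Complex.I * (θ' : ℂ)) * ((η (x - a t) : ℝ) : ℂ)
        + Complex.exp (Complex.I * (((∑ i, p t i * (x i - a t i)) + γ t : ℝ) : ℂ))
          * ((fderiv ℝ η (x - a t) (0 - (2 : ℝ) • p t) : ℝ) : ℂ)) t := by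
    simp only [solWave]
    exact hexp.mul (hηt.ofReal_comp)
  rw [hG.deriv, hsol_eq]
  rw [lapC_F P Cc b η hη x]
  have hsolx : solWave η a p γ x t = Efn P Cc x * ((η (x - b) : ℝ) : ℂ) := by
    rw [congrFun hsol_eq x]; rfl
  rw [hsolx]
  have hexp_eq : Complex.exp (Complex.I * (((∑ i, p t i * (x i - a t i)) + γ t : ℝ) : ℂ))
      = Efn P Cc x := by
    simp only [Efn]
    rw [show (∑ i, p t i * (x i - a t i) : ℝ) = ∑ i, P i * (x i - b i) from rfl, harg x]
  rw [hexp_eq]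
  have habs : ‖Efn P Cc x * ((η (x - b) : ℝ) : ℂ)‖ ^ 2 = η (x - b) ^ 2 := by
    simp [Efn, map_mul, Complex.norm_exp, Complex.norm_real, Complex.mul_re, sq_abs]
  rw [habs]
  simp only [← hb, ← hP]
  set η0 : ℝ := η (x - b) with hη0
  set g0 : ℝ := g (η0 ^ 2) with hg0
  set Sp : ℝ := ∑ j, P j ^ 2 with hSp
  set Sd : ℝ := ∑ j, P j * fderiv ℝ η (x - b) (Pi.single j 1) with hSd
  set Q : ℝ := ∑ i, ∑ j, A i j * (x i - b i) * (x j - b j) with hQ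
  set Vx : ℝ := quadV A v c x with hVx
  set L0 : ℝ := lapR η (x - b) with hL0
  set D0 : ℝ := fderiv ℝ η (x - b) (0 - (2 : ℝ) • P) with hD0
  have hDc : D0 = -(2 * Sd) := by
    rw [hD0, hSd, zero_sub, map_neg, map_smul, fderiv_pi_sum η (x - b) P, smul_eq_mul]
  have hθv : θ' = μ + Q - Vx - Sp := by
    rw [hθ'def, ← hb, ← hP]
    have h1 : ∑ i, ((-((2 : ℝ) • A.mulVec b + v)) i * (x i - b i)
          + P i * (0 - ((2 : ℝ) • P) i))
        = -(∑ i, ((2 : ℝ) • A.mulVec b + v) i * (x i - b i)) - 2 * Sp := by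
      rw [hSp, Finset.mul_sum, ← Finset.sum_neg_distrib, ← Finset.sum_sub_distrib]
      exact Finset.sum_congr rfl fun i _ => by
        simp only [Pi.neg_apply, Pi.smul_apply, smul_eq_mul]
        ring
    rw [h1]
    have hq := quad_taylor A hA v c x b
    rw [← hVx, ← hQ] at hq
    linear_combination hq
  have hlap : L0 = μ * η0 - g0 * η0 + Q * η0 := by
    have h := hprofile (x - b)
    simp only [Pi.sub_apply] at h
    rw [← hη0, ← hg0, ← hQ, ← hL0] at h
    linarith
  have hθC : ((θ' : ℝ) : ℂ) = (μ : ℂ) + (Q : ℂ) - (Vx : ℂ) - (Sp : ℂ) := by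
    rw [hθv]; push_cast; ring
  have hDcC : ((D0 : ℝ) : ℂ) = -(2 * (Sd : ℂ)) := by
    rw [hDc]; push_cast; ring
  have hLC : ((L0 : ℝ) : ℂ) = (μ : ℂ) * (η0 : ℂ) - (g0 : ℂ) * (η0 : ℂ) + (Q : ℂ) * (η0 : ℂ) := by
    rw [hlap]; push_cast; ring
  rw [hθC, hDcC, hLC]
  linear_combination (Efn P Cc x * (η0 : ℂ) * ((μ : ℂ) + (Q : ℂ) - (Vx : ℂ) - (Sp : ℂ)))
    * Complex.I_sq
end
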